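/- arXiv:1809.07885 — 4 statements merged into one kernel-verified Lean document; each statement's English description precedes it below -/
import Mathlib

section
/- Lax pair compatibility is equivalent to Yang's equation: let Ω ⊆ {(ρ,z) ∈ ℝ² : ρ > 0} be open and J : Ω → GL(n,ℂ) twice continuously differentiable. For F(ρ,z,λ) taking values in ℂⁿ, defined for (ρ,z) ∈ Ω and λ ∈ ℂ∖{0}, twice continuously differentiable in (ρ,z) and holomorphic in λ, define L₁F = ∂_ρF + iλ∂_zF + (λ/ρ)∂_λF + iλ(J⁻¹∂_zJ)F and L₂F = i∂_zF + λ∂_ρF − (λ²/ρ)∂_λF + λ(J⁻¹∂_ρJ)F. Then the identity L₁(L₂F) − L₂(L₁F) = (λ/ρ)L₁F holds for every such F at every point (ρ,z,λ) if and only if J satisfies Yang's equation ∂_ρ(ρ J⁻¹∂_ρJ) + ∂_z(ρ J⁻¹∂_zJ) = 0 on Ω. -/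
attribute [local instance] Matrix.normedAddCommGroup Matrix.normedSpace

/-- Test functions for the Lax pair: `F(ρ,z,λ)`, with values in `ℂⁿ`, twice
continuously differentiable in the real sense on `Ω × (ℂ ∖ {0})` and
holomorphic in `λ` there. -/
def LaxTest (n : ℕ) (Ω : Set (ℝ × ℝ)) (F : ℝ → ℝ → ℂ → (Fin n → ℂ)) : Prop :=
  ContDiffOn ℝ 2 (fun p : ℝ × ℝ × ℂ => F p.1 p.2.1 p.2.2)
      {p : ℝ × ℝ × ℂ | (p.1, p.2.1) ∈ Ω ∧ p.2.2 ≠ 0} ∧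
  ∀ ρ z : ℝ, (ρ, z) ∈ Ω → ∀ l : ℂ, l ≠ 0 →
    DifferentiableAt ℂ (fun w : ℂ => F ρ z w) l

/-- The Lax operator `L₁ = ∂_ρ + iλ∂_z + (λ/ρ)∂_λ + iλ(J⁻¹∂_zJ)`. -/
noncomputable def LaxL1 (n : ℕ) (J : ℝ → ℝ → Matrix (Fin n) (Fin n) ℂ)
    (F : ℝ → ℝ → ℂ → (Fin n → ℂ)) (ρ z : ℝ) (l : ℂ) : Fin n → ℂ :=
  deriv (fun r : ℝ => F r z l) ρ
    + (Complex.I * l) • deriv (fun z' : ℝ => F ρ z' l) z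
    + (l / (ρ : ℂ)) • deriv (fun w : ℂ => F ρ z w) l
    + (Complex.I * l) •
        Matrix.mulVec ((J ρ z)⁻¹ * deriv (fun z' : ℝ => J ρ z') z) (F ρ z l)

/-- The Lax operator `L₂ = i∂_z + λ∂_ρ − (λ²/ρ)∂_λ + λ(J⁻¹∂_ρJ)`. -/
noncomputable def LaxL2 (n : ℕ) (J : ℝ → ℝ → Matrix (Fin n) (Fin n) ℂ)
    (F : ℝ → ℝ → ℂ → (Fin n → ℂ)) (ρ z : ℝ) (l : ℂ) : Fin n → ℂ :=
  Complex.I • deriv (fun z' : ℝ => F ρ z' l) z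
    + l • deriv (fun r : ℝ => F r z l) ρ
    - (l ^ 2 / (ρ : ℂ)) • deriv (fun w : ℂ => F ρ z w) l
    + l • Matrix.mulVec ((J ρ z)⁻¹ * deriv (fun r : ℝ => J r z) ρ) (F ρ z l)


-- ### Auxiliary infrastructure ###




open Matrix Filter

variable {n : ℕ} {𝕜 : Type*} [NontriviallyNormedField 𝕜] [NormedAlgebra 𝕜 ℂ]

lemma hasDerivAt_matrix {A : 𝕜 → Matrix (Fin n) (Fin n) ℂ} {A' : Matrix (Fin n) (Fin n) ℂ}
    {t : 𝕜} : HasDerivAt A A' t ↔ ∀ i j, HasDerivAt (fun t => A t i j) (A' i j) t := by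
  refine hasDerivAt_pi.trans (forall_congr' fun i => ?_)
  exact hasDerivAt_pi

lemma HasDerivAt.matmul {A B : 𝕜 → Matrix (Fin n) (Fin n) ℂ} {A' B' : Matrix (Fin n) (Fin n) ℂ}
    {t : 𝕜} (hA : HasDerivAt A A' t) (hB : HasDerivAt B B' t) :
    HasDerivAt (fun t => A t * B t) (A' * B t + A t * B') t := by
  rw [hasDerivAt_matrix] at hA hB ⊢
  intro i j
  simp only [Matrix.mul_apply, Matrix.add_apply]
  have : ∀ k ∈ Finset.univ, HasDerivAt (fun t => A t i k * B t k j)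
      (A' i k * B t k j + A t i k * B' k j) t := fun k _ => (hA i k).mul (hB k j)
  simpa [Finset.sum_add_distrib] using (HasDerivAt.fun_sum this)

lemma HasDerivAt.mulVecc {A : 𝕜 → Matrix (Fin n) (Fin n) ℂ} {x : 𝕜 → (Fin n → ℂ)}
    {A' : Matrix (Fin n) (Fin n) ℂ} {x' : Fin n → ℂ} {t : 𝕜}
    (hA : HasDerivAt A A' t) (hx : HasDerivAt x x' t) :
    HasDerivAt (fun t => A t *ᵥ x t) (A' *ᵥ x t + A t *ᵥ x') t := by
  rw [hasDerivAt_matrix] at hA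
  rw [hasDerivAt_pi] at hx ⊢
  intro i
  simp only [Matrix.mulVec, dotProduct, Pi.add_apply]
  have : ∀ k ∈ Finset.univ, HasDerivAt (fun t => A t i k * x t k)
      (A' i k * x t k + A t i k * x' k) t := fun k _ => (hA i k).mul (hx k)
  simpa [Finset.sum_add_distrib] using (HasDerivAt.fun_sum this)








lemma differentiableAt_matrix {A : 𝕜 → Matrix (Fin n) (Fin n) ℂ} {t : 𝕜} :
    DifferentiableAt 𝕜 A t ↔ ∀ i j, DifferentiableAt 𝕜 (fun t => A t i j) t := by
  exact differentiableAt_pi.trans (forall_congr' fun i => differentiableAt_pi)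

lemma DifferentiableAt.matrix_det {A : 𝕜 → Matrix (Fin n) (Fin n) ℂ} {t : 𝕜}
    (hA : DifferentiableAt 𝕜 A t) : DifferentiableAt 𝕜 (fun t => (A t).det) t := by
  rw [differentiableAt_matrix] at hA
  simp only [Matrix.det_apply]
  refine DifferentiableAt.fun_sum fun σ _ => ?_
  have h1 : DifferentiableAt 𝕜 (fun t => ∏ i, A t (σ i) i) t := by
    have := HasDerivAt.fun_finsetProd (u := Finset.univ)
      (f := fun i t => A t (σ i) i) (f' := fun i => deriv (fun t => A t (σ i) i) t)
      (fun i _ => (hA (σ i) i).hasDerivAt)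
    exact this.differentiableAt
  have : (fun t => Equiv.Perm.sign σ • ∏ i, A t (σ i) i)
      = fun t => ((Equiv.Perm.sign σ : ℤ) : ℂ) * ∏ i, A t (σ i) i := by
    funext t; simp [Units.smul_def, zsmul_eq_mul]
  rw [this]
  exact h1.const_mul _

lemma DifferentiableAt.matrix_adjugate {A : 𝕜 → Matrix (Fin n) (Fin n) ℂ} {t : 𝕜}
    (hA : DifferentiableAt 𝕜 A t) : DifferentiableAt 𝕜 (fun t => (A t).adjugate) t := by
  have h := differentiableAt_matrix.1 hA
  rw [differentiableAt_matrix]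
  intro i j
  simp only [Matrix.adjugate_apply]
  apply DifferentiableAt.matrix_det
  rw [differentiableAt_matrix]
  intro k m
  by_cases hk : k = j
  · subst hk; simp only [Matrix.updateRow_self]; exact differentiableAt_const _
  · simp only [Matrix.updateRow_ne hk]; exact h k m

lemma DifferentiableAt.matrix_inv {A : 𝕜 → Matrix (Fin n) (Fin n) ℂ} {t : 𝕜}
    (hA : DifferentiableAt 𝕜 A t) (hU : IsUnit (A t)) :
    DifferentiableAt 𝕜 (fun t => (A t)⁻¹) t := by
  have hdet : (A t).det ≠ 0 := ((Matrix.isUnit_iff_isUnit_det _).1 hU).ne_zero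
  have : (fun t => (A t)⁻¹) = fun t => (Ring.inverse (A t).det) • (A t).adjugate := by
    funext t; rw [Matrix.inv_def]
  rw [this]
  simp only [Ring.inverse_eq_inv]
  exact (hA.matrix_det.inv hdet).smul hA.matrix_adjugate






/-- Upgrade a real Fréchet derivative which is complex-linear to a complex derivative. -/
lemma hasDerivAt_of_real_clinear {V : Type*} [NormedAddCommGroup V] [NormedSpace ℂ V]
    {h : ℂ → V} {L : ℂ →L[ℝ] V} {c : V} {l : ℂ}
    (H : HasFDerivAt (𝕜 := ℝ) h L l) (hL : ∀ w, L w = w • c) : HasDerivAt h c l := by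
  rw [hasDerivAt_iff_hasFDerivAt]
  have e : L = (ContinuousLinearMap.smulRight (1 : ℂ →L[ℂ] ℂ) c).restrictScalars ℝ := by
    ext w; simp [hL w]
  rw [e] at H
  rw [hasFDerivAt_iff_isLittleO_nhds_zero] at H ⊢
  simpa using H

section Slice

variable {V : Type*} [NormedAddCommGroup V] [NormedSpace ℂ V]

variable (F : ℝ → ℝ → ℂ → V) (U : Set (ℝ × ℝ × ℂ))

/-- Full real Fréchet derivative of the joint function. -/
noncomputable def Gfd (F : ℝ → ℝ → ℂ → V) : (ℝ × ℝ × ℂ) → (ℝ × ℝ × ℂ) →L[ℝ] V :=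
  fderiv ℝ (fun p : ℝ × ℝ × ℂ => F p.1 p.2.1 p.2.2)

/-- The linear embedding `w ↦ (0,0,w)`. -/
noncomputable def emb3 : ℂ →L[ℝ] ℝ × ℝ × ℂ :=
  (0 : ℂ →L[ℝ] ℝ).prod ((0 : ℂ →L[ℝ] ℝ).prod (ContinuousLinearMap.id ℝ ℂ))

@[simp] lemma emb3_apply (w : ℂ) : emb3 w = (0, 0, w) := rfl

variable {F U}

variable (hU : IsOpen U)
  (hF : ContDiffOn ℝ 2 (fun p : ℝ × ℝ × ℂ => F p.1 p.2.1 p.2.2) U)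
  (hol : ∀ p ∈ U, DifferentiableAt ℂ (fun w : ℂ => F p.1 p.2.1 w) p.2.2)

include hU hF in
lemma G_hasFDerivAt {p : ℝ × ℝ × ℂ} (hp : p ∈ U) :
    HasFDerivAt (fun p : ℝ × ℝ × ℂ => F p.1 p.2.1 p.2.2) (Gfd F p) p := by
  have := (hF.contDiffAt (hU.mem_nhds hp)).differentiableAt two_ne_zero
  exact this.hasFDerivAt

include hU hF in
lemma line1_hasDerivAt {p : ℝ × ℝ × ℂ} (hp : p ∈ U) :
    HasDerivAt (fun r : ℝ => F r p.2.1 p.2.2) (Gfd F p (1, 0, 0)) p.1 := by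
  have hline : HasDerivAt (fun r : ℝ => ((r, p.2.1, p.2.2) : ℝ × ℝ × ℂ))
      ((1 : ℝ), (0 : ℝ), (0 : ℂ)) p.1 :=
    (hasDerivAt_id p.1).prodMk (hasDerivAt_const _ _)
  have := (G_hasFDerivAt hU hF hp).comp_hasDerivAt p.1 (by simpa using hline)
  simpa [Function.comp_def] using this

include hU hF in
lemma line2_hasDerivAt {p : ℝ × ℝ × ℂ} (hp : p ∈ U) :
    HasDerivAt (fun z' : ℝ => F p.1 z' p.2.2) (Gfd F p (0, 1, 0)) p.2.1 := by
  have hline : HasDerivAt (fun z' : ℝ => ((p.1, z', p.2.2) : ℝ × ℝ × ℂ))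
      ((0 : ℝ), (1 : ℝ), (0 : ℂ)) p.2.1 :=
    (hasDerivAt_const _ _).prodMk ((hasDerivAt_id p.2.1).prodMk (hasDerivAt_const _ _))
  have := (G_hasFDerivAt hU hF hp).comp_hasDerivAt p.2.1 (by simpa using hline)
  simpa [Function.comp_def] using this

include hU hF in
lemma line3_hasFDerivAt {p : ℝ × ℝ × ℂ} (hp : p ∈ U) :
    HasFDerivAt (𝕜 := ℝ) (fun w : ℂ => F p.1 p.2.1 w) ((Gfd F p).comp emb3) p.2.2 := by
  have hemb : HasFDerivAt (fun w : ℂ => ((p.1, p.2.1, w) : ℝ × ℝ × ℂ)) emb3 p.2.2 := by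
    apply HasFDerivAt.prodMk
    · simpa using hasFDerivAt_const p.1 p.2.2
    · apply HasFDerivAt.prodMk
      · simpa using hasFDerivAt_const p.2.1 p.2.2
      · exact hasFDerivAt_id _
  have := HasFDerivAt.comp (x := p.2.2) (G_hasFDerivAt hU hF hp) hemb
  simpa [Function.comp_def] using this

include hU hF hol in
lemma line3_hasDerivAt {p : ℝ × ℝ × ℂ} (hp : p ∈ U) :
    HasDerivAt (fun w : ℂ => F p.1 p.2.1 w) (Gfd F p (0, 0, 1)) p.2.2 := by
  have hd := (hol p hp).hasDerivAt
  have h1 : HasFDerivAt (𝕜 := ℝ) (fun w : ℂ => F p.1 p.2.1 w)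
      ((ContinuousLinearMap.smulRight (1 : ℂ →L[ℂ] ℂ)
        (deriv (fun w : ℂ => F p.1 p.2.1 w) p.2.2)).restrictScalars ℝ) p.2.2 :=
    (hasDerivAt_iff_hasFDerivAt.1 hd).restrictScalars ℝ
  have h2 := (line3_hasFDerivAt hU hF hp).unique h1
  have h3 : Gfd F p (0, 0, 1) = deriv (fun w : ℂ => F p.1 p.2.1 w) p.2.2 := by
    have := congrArg (fun (L : ℂ →L[ℝ] V) => L 1) h2
    simpa using this
  rw [h3]; exact hd

include hU hF hol in
lemma phi_e3_smul {p : ℝ × ℝ × ℂ} (hp : p ∈ U) (w : ℂ) :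
    Gfd F p (0, 0, w) = w • Gfd F p (0, 0, 1) := by
  have hd := (hol p hp).hasDerivAt
  have h1 : HasFDerivAt (𝕜 := ℝ) (fun w : ℂ => F p.1 p.2.1 w)
      ((ContinuousLinearMap.smulRight (1 : ℂ →L[ℂ] ℂ)
        (deriv (fun w : ℂ => F p.1 p.2.1 w) p.2.2)).restrictScalars ℝ) p.2.2 :=
    (hasDerivAt_iff_hasFDerivAt.1 hd).restrictScalars ℝ
  have h2 := (line3_hasFDerivAt hU hF hp).unique h1
  have h4 := congrArg (fun (L : ℂ →L[ℝ] V) => L w) h2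
  have h5 := congrArg (fun (L : ℂ →L[ℝ] V) => L 1) h2
  simp only [ContinuousLinearMap.coe_comp', Function.comp_apply,
    ContinuousLinearMap.coe_restrictScalars', ContinuousLinearMap.smulRight_apply,
    ContinuousLinearMap.one_apply, one_smul, emb3_apply] at h4 h5
  rw [h4, h5]


/-- Second Fréchet derivative of the joint function. -/
noncomputable abbrev Sfd (F : ℝ → ℝ → ℂ → V) (p : ℝ × ℝ × ℂ) :
    (ℝ × ℝ × ℂ) →L[ℝ] (ℝ × ℝ × ℂ) →L[ℝ] V :=
  fderiv ℝ (Gfd F) p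

include hU hF in
lemma Gfd_diffAt {p : ℝ × ℝ × ℂ} (hp : p ∈ U) : DifferentiableAt ℝ (Gfd F) p := by
  have h1 := (hF.contDiffAt (hU.mem_nhds hp)).fderiv_right (m := 1) (by norm_num)
  exact h1.differentiableAt one_ne_zero

include hU hF in
lemma Sfd_symm {p : ℝ × ℝ × ℂ} (hp : p ∈ U) (a b : ℝ × ℝ × ℂ) :
    Sfd F p a b = Sfd F p b a := by
  refine second_derivative_symmetric_of_eventually (f := fun p : ℝ × ℝ × ℂ => F p.1 p.2.1 p.2.2)
    (f' := Gfd F) ?_ (Gfd_diffAt hU hF hp).hasFDerivAt a b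
  filter_upwards [hU.mem_nhds hp] with y hy using G_hasFDerivAt hU hF hy

include hU hF in
lemma Sfd_line1 {p : ℝ × ℝ × ℂ} (hp : p ∈ U) (v : ℝ × ℝ × ℂ) :
    HasDerivAt (fun r : ℝ => Gfd F (r, p.2.1, p.2.2) v) (Sfd F p (1, 0, 0) v) p.1 := by
  have happly : HasFDerivAt (fun q : ℝ × ℝ × ℂ => Gfd F q v)
      ((ContinuousLinearMap.apply ℝ V v).comp (Sfd F p)) p :=
    (ContinuousLinearMap.apply ℝ V v).hasFDerivAt.comp p (Gfd_diffAt hU hF hp).hasFDerivAt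
  have hline : HasDerivAt (fun r : ℝ => ((r, p.2.1, p.2.2) : ℝ × ℝ × ℂ))
      ((1 : ℝ), (0 : ℝ), (0 : ℂ)) p.1 :=
    (hasDerivAt_id p.1).prodMk (hasDerivAt_const _ _)
  have := happly.comp_hasDerivAt p.1 (by simpa using hline)
  simpa [Function.comp_def] using this

include hU hF in
lemma Sfd_line2 {p : ℝ × ℝ × ℂ} (hp : p ∈ U) (v : ℝ × ℝ × ℂ) :
    HasDerivAt (fun z' : ℝ => Gfd F (p.1, z', p.2.2) v) (Sfd F p (0, 1, 0) v) p.2.1 := by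
  have happly : HasFDerivAt (fun q : ℝ × ℝ × ℂ => Gfd F q v)
      ((ContinuousLinearMap.apply ℝ V v).comp (Sfd F p)) p :=
    (ContinuousLinearMap.apply ℝ V v).hasFDerivAt.comp p (Gfd_diffAt hU hF hp).hasFDerivAt
  have hline : HasDerivAt (fun z' : ℝ => ((p.1, z', p.2.2) : ℝ × ℝ × ℂ))
      ((0 : ℝ), (1 : ℝ), (0 : ℂ)) p.2.1 :=
    (hasDerivAt_const _ _).prodMk ((hasDerivAt_id p.2.1).prodMk (hasDerivAt_const _ _))
  have := happly.comp_hasDerivAt p.2.1 (by simpa using hline)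
  simpa [Function.comp_def] using this

include hU hF hol in
lemma Sfd_e3_smul {p : ℝ × ℝ × ℂ} (hp : p ∈ U) (w : ℂ) (v : ℝ × ℝ × ℂ) :
    Sfd F p (0, 0, w) v = w • Sfd F p (0, 0, 1) v := by
  have hS := (Gfd_diffAt hU hF hp).hasFDerivAt
  have hA : HasFDerivAt (fun q : ℝ × ℝ × ℂ => Gfd F q (0, 0, w))
      ((ContinuousLinearMap.apply ℝ V ((0 : ℝ), (0 : ℝ), w)).comp (Sfd F p)) p :=
    (ContinuousLinearMap.apply ℝ V ((0 : ℝ), (0 : ℝ), w)).hasFDerivAt.comp p hS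
  have hB : HasFDerivAt (fun q : ℝ × ℝ × ℂ => w • Gfd F q ((0 : ℝ), (0 : ℝ), (1 : ℂ)))
      (w • (ContinuousLinearMap.apply ℝ V ((0 : ℝ), (0 : ℝ), (1 : ℂ))).comp (Sfd F p)) p :=
    ((ContinuousLinearMap.apply ℝ V ((0 : ℝ), (0 : ℝ), (1 : ℂ))).hasFDerivAt.comp p hS).const_smul w
  have heq : (fun q : ℝ × ℝ × ℂ => Gfd F q (0, 0, w))
      =ᶠ[nhds p] fun q : ℝ × ℝ × ℂ => w • Gfd F q ((0 : ℝ), (0 : ℝ), (1 : ℂ)) := by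
    filter_upwards [hU.mem_nhds hp] with y hy using phi_e3_smul hU hF hol hy w
  have hA' : HasFDerivAt (fun q : ℝ × ℝ × ℂ => Gfd F q (0, 0, w))
      (w • (ContinuousLinearMap.apply ℝ V ((0 : ℝ), (0 : ℝ), (1 : ℂ))).comp (Sfd F p)) p :=
    hB.congr_of_eventuallyEq heq
  have h2 := hA.unique hA'
  have h3 := congrArg (fun (L : (ℝ × ℝ × ℂ) →L[ℝ] V) => L v) h2
  simp only [ContinuousLinearMap.coe_comp', Function.comp_apply,
    ContinuousLinearMap.apply_apply, ContinuousLinearMap.coe_smul', Pi.smul_apply] at h3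
  calc Sfd F p (0, 0, w) v = Sfd F p v (0, 0, w) := Sfd_symm hU hF hp _ _
    _ = w • Sfd F p v (0, 0, 1) := h3
    _ = w • Sfd F p (0, 0, 1) v := by rw [Sfd_symm hU hF hp v]

include hU hF hol in
lemma Sfd_line3 {p : ℝ × ℝ × ℂ} (hp : p ∈ U) (v : ℝ × ℝ × ℂ) :
    HasDerivAt (fun w : ℂ => Gfd F (p.1, p.2.1, w) v) (Sfd F p (0, 0, 1) v) p.2.2 := by
  have hS := (Gfd_diffAt hU hF hp).hasFDerivAt
  have happly : HasFDerivAt (fun q : ℝ × ℝ × ℂ => Gfd F q v)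
      ((ContinuousLinearMap.apply ℝ V v).comp (Sfd F p)) p :=
    (ContinuousLinearMap.apply ℝ V v).hasFDerivAt.comp p hS
  have hemb : HasFDerivAt (fun w : ℂ => ((p.1, p.2.1, w) : ℝ × ℝ × ℂ)) emb3 p.2.2 := by
    apply HasFDerivAt.prodMk
    · simpa using hasFDerivAt_const p.1 p.2.2
    · apply HasFDerivAt.prodMk
      · simpa using hasFDerivAt_const p.2.1 p.2.2
      · exact hasFDerivAt_id _
  have hreal : HasFDerivAt (𝕜 := ℝ) (fun w : ℂ => Gfd F (p.1, p.2.1, w) v)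
      (((ContinuousLinearMap.apply ℝ V v).comp (Sfd F p)).comp emb3) p.2.2 := by
    have := happly.comp (x := p.2.2) hemb
    simpa [Function.comp_def] using this
  apply hasDerivAt_of_real_clinear hreal
  intro w
  simp only [ContinuousLinearMap.coe_comp', Function.comp_apply, emb3_apply,
    ContinuousLinearMap.apply_apply]
  calc Sfd F p (0, 0, w) v = w • Sfd F p (0, 0, 1) v := Sfd_e3_smul hU hF hol hp w v

end Slice

-- Jside
section Jside

variable {n : ℕ} {Ω : Set (ℝ × ℝ)} {J : ℝ → ℝ → Matrix (Fin n) (Fin n) ℂ}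

/-- Fréchet derivative of the joint matrix function. -/
noncomputable def Jfd (J : ℝ → ℝ → Matrix (Fin n) (Fin n) ℂ) :
    (ℝ × ℝ) → (ℝ × ℝ) →L[ℝ] Matrix (Fin n) (Fin n) ℂ :=
  fderiv ℝ (fun q : ℝ × ℝ => J q.1 q.2)

/-- Second Fréchet derivative of the joint matrix function. -/
noncomputable abbrev SJfd (J : ℝ → ℝ → Matrix (Fin n) (Fin n) ℂ) (q : ℝ × ℝ) :
    (ℝ × ℝ) →L[ℝ] (ℝ × ℝ) →L[ℝ] Matrix (Fin n) (Fin n) ℂ :=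
  fderiv ℝ (Jfd J) q

variable (hΩ : IsOpen Ω) (hJ : ContDiffOn ℝ 2 (fun p : ℝ × ℝ => J p.1 p.2) Ω)
  (hinv : ∀ p ∈ Ω, IsUnit (J p.1 p.2))

include hΩ hJ in
lemma J_hasFDerivAt {q : ℝ × ℝ} (hq : q ∈ Ω) :
    HasFDerivAt (fun q : ℝ × ℝ => J q.1 q.2) (Jfd J q) q :=
  ((hJ.contDiffAt (hΩ.mem_nhds hq)).differentiableAt two_ne_zero).hasFDerivAt

include hΩ hJ in
lemma J_line1 {q : ℝ × ℝ} (hq : q ∈ Ω) :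
    HasDerivAt (fun t : ℝ => J t q.2) (Jfd J q (1, 0)) q.1 := by
  have hline : HasDerivAt (fun t : ℝ => ((t, q.2) : ℝ × ℝ)) ((1 : ℝ), (0 : ℝ)) q.1 :=
    (hasDerivAt_id q.1).prodMk (hasDerivAt_const _ _)
  have := (J_hasFDerivAt hΩ hJ hq).comp_hasDerivAt q.1 (by simpa using hline)
  exact this

include hΩ hJ in
lemma J_line2 {q : ℝ × ℝ} (hq : q ∈ Ω) :
    HasDerivAt (fun t : ℝ => J q.1 t) (Jfd J q (0, 1)) q.2 := by
  have hline : HasDerivAt (fun t : ℝ => ((q.1, t) : ℝ × ℝ)) ((0 : ℝ), (1 : ℝ)) q.2 :=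
    (hasDerivAt_const _ _).prodMk (hasDerivAt_id q.2)
  have := (J_hasFDerivAt hΩ hJ hq).comp_hasDerivAt q.2 (by simpa using hline)
  exact this

include hΩ hJ in
lemma Jfd_diffAt {q : ℝ × ℝ} (hq : q ∈ Ω) : DifferentiableAt ℝ (Jfd J) q := by
  have h1 := (hJ.contDiffAt (hΩ.mem_nhds hq)).fderiv_right (m := 1) (by norm_num)
  exact h1.differentiableAt one_ne_zero

include hΩ hJ in
lemma SJfd_symm {q : ℝ × ℝ} (hq : q ∈ Ω) (a b : ℝ × ℝ) :
    SJfd J q a b = SJfd J q b a := by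
  refine second_derivative_symmetric_of_eventually (f := fun q : ℝ × ℝ => J q.1 q.2)
    (f' := Jfd J) ?_ (Jfd_diffAt hΩ hJ hq).hasFDerivAt a b
  filter_upwards [hΩ.mem_nhds hq] with y hy using J_hasFDerivAt hΩ hJ hy

include hΩ hJ in
lemma Jfd_line1 {q : ℝ × ℝ} (hq : q ∈ Ω) (v : ℝ × ℝ) :
    HasDerivAt (fun t : ℝ => Jfd J (t, q.2) v) (SJfd J q (1, 0) v) q.1 := by
  have happly : HasFDerivAt (fun w : ℝ × ℝ => Jfd J w v)
      ((ContinuousLinearMap.apply ℝ (Matrix (Fin n) (Fin n) ℂ) v).comp (SJfd J q)) q :=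
    (ContinuousLinearMap.apply ℝ (Matrix (Fin n) (Fin n) ℂ) v).hasFDerivAt.comp q
      (Jfd_diffAt hΩ hJ hq).hasFDerivAt
  have hline : HasDerivAt (fun t : ℝ => ((t, q.2) : ℝ × ℝ)) ((1 : ℝ), (0 : ℝ)) q.1 :=
    (hasDerivAt_id q.1).prodMk (hasDerivAt_const _ _)
  have := happly.comp_hasDerivAt q.1 (by simpa using hline)
  exact this

include hΩ hJ in
lemma Jfd_line2 {q : ℝ × ℝ} (hq : q ∈ Ω) (v : ℝ × ℝ) :
    HasDerivAt (fun t : ℝ => Jfd J (q.1, t) v) (SJfd J q (0, 1) v) q.2 := by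
  have happly : HasFDerivAt (fun w : ℝ × ℝ => Jfd J w v)
      ((ContinuousLinearMap.apply ℝ (Matrix (Fin n) (Fin n) ℂ) v).comp (SJfd J q)) q :=
    (ContinuousLinearMap.apply ℝ (Matrix (Fin n) (Fin n) ℂ) v).hasFDerivAt.comp q
      (Jfd_diffAt hΩ hJ hq).hasFDerivAt
  have hline : HasDerivAt (fun t : ℝ => ((q.1, t) : ℝ × ℝ)) ((0 : ℝ), (1 : ℝ)) q.2 :=
    (hasDerivAt_const _ _).prodMk (hasDerivAt_id q.2)
  have := happly.comp_hasDerivAt q.2 (by simpa using hline)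
  exact this

include hΩ hJ hinv in
lemma K_line1 {q : ℝ × ℝ} (hq : q ∈ Ω) :
    HasDerivAt (fun t : ℝ => (J t q.2)⁻¹)
      (-((J q.1 q.2)⁻¹ * Jfd J q (1, 0) * (J q.1 q.2)⁻¹)) q.1 := by
  have hA := J_line1 hΩ hJ hq
  have hdiff : DifferentiableAt ℝ (fun t : ℝ => (J t q.2)⁻¹) q.1 :=
    DifferentiableAt.matrix_inv hA.differentiableAt (by simpa using hinv q hq)
  have hKd := hdiff.hasDerivAt
  set d := deriv (fun t : ℝ => (J t q.2)⁻¹) q.1 with hd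
  have hev : (fun t : ℝ => J t q.2 * (J t q.2)⁻¹) =ᶠ[nhds q.1] fun _ => (1 : Matrix (Fin n) (Fin n) ℂ) := by
    have hcont : Continuous (fun t : ℝ => ((t, q.2) : ℝ × ℝ)) := by fun_prop
    have : ∀ᶠ t in nhds q.1, ((t, q.2) : ℝ × ℝ) ∈ Ω := by
      have := hcont.continuousAt (x := q.1) (hΩ.mem_nhds (by simpa using hq))
      exact this
    filter_upwards [this] with t ht
    exact Matrix.mul_nonsing_inv _ ((Matrix.isUnit_iff_isUnit_det _).1 (hinv _ ht))
  have hprod : HasDerivAt (fun t : ℝ => J t q.2 * (J t q.2)⁻¹)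
      (Jfd J q (1, 0) * (J q.1 q.2)⁻¹ + J q.1 q.2 * d) q.1 := hA.matmul hKd
  have hzero : HasDerivAt (fun t : ℝ => J t q.2 * (J t q.2)⁻¹) 0 q.1 :=
    (hasDerivAt_const q.1 (1 : Matrix (Fin n) (Fin n) ℂ)).congr_of_eventuallyEq hev
  have huniq : Jfd J q (1, 0) * (J q.1 q.2)⁻¹ + J q.1 q.2 * d = 0 := by
    have := hprod.unique hzero; simpa using this
  have hKJ : (J q.1 q.2)⁻¹ * J q.1 q.2 = 1 :=
    Matrix.nonsing_inv_mul _ ((Matrix.isUnit_iff_isUnit_det _).1 (hinv q hq))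
  have hsolve : d = -((J q.1 q.2)⁻¹ * Jfd J q (1, 0) * (J q.1 q.2)⁻¹) := by
    have h1 : J q.1 q.2 * d = -(Jfd J q (1, 0) * (J q.1 q.2)⁻¹) := by
      have := congrArg (fun M => M - Jfd J q (1, 0) * (J q.1 q.2)⁻¹) huniq
      simpa [add_sub_cancel_left] using (by linear_combination (norm := noncomm_ring) huniq : J q.1 q.2 * d = -(Jfd J q (1, 0) * (J q.1 q.2)⁻¹))
    calc d = ((J q.1 q.2)⁻¹ * J q.1 q.2) * d := by rw [hKJ, one_mul]
      _ = (J q.1 q.2)⁻¹ * (J q.1 q.2 * d) := by rw [Matrix.mul_assoc]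
      _ = (J q.1 q.2)⁻¹ * -(Jfd J q (1, 0) * (J q.1 q.2)⁻¹) := by rw [h1]
      _ = -((J q.1 q.2)⁻¹ * Jfd J q (1, 0) * (J q.1 q.2)⁻¹) := by
          rw [Matrix.mul_neg, Matrix.mul_assoc]
  rw [← hsolve]; exact hKd

include hΩ hJ hinv in
lemma K_line2 {q : ℝ × ℝ} (hq : q ∈ Ω) :
    HasDerivAt (fun t : ℝ => (J q.1 t)⁻¹)
      (-((J q.1 q.2)⁻¹ * Jfd J q (0, 1) * (J q.1 q.2)⁻¹)) q.2 := by
  have hA := J_line2 hΩ hJ hq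
  have hdiff : DifferentiableAt ℝ (fun t : ℝ => (J q.1 t)⁻¹) q.2 :=
    DifferentiableAt.matrix_inv hA.differentiableAt (by simpa using hinv q hq)
  have hKd := hdiff.hasDerivAt
  set d := deriv (fun t : ℝ => (J q.1 t)⁻¹) q.2 with hd
  have hev : (fun t : ℝ => J q.1 t * (J q.1 t)⁻¹) =ᶠ[nhds q.2] fun _ => (1 : Matrix (Fin n) (Fin n) ℂ) := by
    have hcont : Continuous (fun t : ℝ => ((q.1, t) : ℝ × ℝ)) := by fun_prop
    have : ∀ᶠ t in nhds q.2, ((q.1, t) : ℝ × ℝ) ∈ Ω := by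
      have := hcont.continuousAt (x := q.2) (hΩ.mem_nhds (by simpa using hq))
      exact this
    filter_upwards [this] with t ht
    exact Matrix.mul_nonsing_inv _ ((Matrix.isUnit_iff_isUnit_det _).1 (hinv _ ht))
  have hprod : HasDerivAt (fun t : ℝ => J q.1 t * (J q.1 t)⁻¹)
      (Jfd J q (0, 1) * (J q.1 q.2)⁻¹ + J q.1 q.2 * d) q.2 := hA.matmul hKd
  have hzero : HasDerivAt (fun t : ℝ => J q.1 t * (J q.1 t)⁻¹) 0 q.2 :=
    (hasDerivAt_const q.2 (1 : Matrix (Fin n) (Fin n) ℂ)).congr_of_eventuallyEq hev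
  have huniq : Jfd J q (0, 1) * (J q.1 q.2)⁻¹ + J q.1 q.2 * d = 0 := by
    have := hprod.unique hzero; simpa using this
  have hKJ : (J q.1 q.2)⁻¹ * J q.1 q.2 = 1 :=
    Matrix.nonsing_inv_mul _ ((Matrix.isUnit_iff_isUnit_det _).1 (hinv q hq))
  have hsolve : d = -((J q.1 q.2)⁻¹ * Jfd J q (0, 1) * (J q.1 q.2)⁻¹) := by
    have h1 : J q.1 q.2 * d = -(Jfd J q (0, 1) * (J q.1 q.2)⁻¹) := by
      simpa [add_sub_cancel_left] using (by linear_combination (norm := noncomm_ring) huniq : J q.1 q.2 * d = -(Jfd J q (0, 1) * (J q.1 q.2)⁻¹))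
    calc d = ((J q.1 q.2)⁻¹ * J q.1 q.2) * d := by rw [hKJ, one_mul]
      _ = (J q.1 q.2)⁻¹ * (J q.1 q.2 * d) := by rw [Matrix.mul_assoc]
      _ = (J q.1 q.2)⁻¹ * -(Jfd J q (0, 1) * (J q.1 q.2)⁻¹) := by rw [h1]
      _ = -((J q.1 q.2)⁻¹ * Jfd J q (0, 1) * (J q.1 q.2)⁻¹) := by
          rw [Matrix.mul_neg, Matrix.mul_assoc]
  rw [← hsolve]; exact hKd

end Jside

-- wrappers
section Wrappers

variable {n : ℕ} {V : Type*} [NormedAddCommGroup V] [NormedSpace ℂ V]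
variable {F : ℝ → ℝ → ℂ → V} {U : Set (ℝ × ℝ × ℂ)}
variable (hU : IsOpen U)
  (hF : ContDiffOn ℝ 2 (fun p : ℝ × ℝ × ℂ => F p.1 p.2.1 p.2.2) U)
  (hol : ∀ p ∈ U, DifferentiableAt ℂ (fun w : ℂ => F p.1 p.2.1 w) p.2.2)
variable {ρ z : ℝ} {l : ℂ}

include hU hF in
lemma line1' (hp : ((ρ, z, l) : ℝ × ℝ × ℂ) ∈ U) :
    HasDerivAt (fun r : ℝ => F r z l) (Gfd F (ρ, z, l) (1, 0, 0)) ρ :=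
  line1_hasDerivAt hU hF hp

include hU hF in
lemma line2' (hp : ((ρ, z, l) : ℝ × ℝ × ℂ) ∈ U) :
    HasDerivAt (fun z' : ℝ => F ρ z' l) (Gfd F (ρ, z, l) (0, 1, 0)) z :=
  line2_hasDerivAt hU hF hp

include hU hF hol in
lemma line3' (hp : ((ρ, z, l) : ℝ × ℝ × ℂ) ∈ U) :
    HasDerivAt (fun w : ℂ => F ρ z w) (Gfd F (ρ, z, l) (0, 0, 1)) l :=
  line3_hasDerivAt hU hF hol hp

include hU hF in
lemma Sfd_line1' (hp : ((ρ, z, l) : ℝ × ℝ × ℂ) ∈ U) (v : ℝ × ℝ × ℂ) :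
    HasDerivAt (fun r : ℝ => Gfd F (r, z, l) v) (Sfd F (ρ, z, l) (1, 0, 0) v) ρ :=
  Sfd_line1 hU hF hp v

include hU hF in
lemma Sfd_line2' (hp : ((ρ, z, l) : ℝ × ℝ × ℂ) ∈ U) (v : ℝ × ℝ × ℂ) :
    HasDerivAt (fun z' : ℝ => Gfd F (ρ, z', l) v) (Sfd F (ρ, z, l) (0, 1, 0) v) z :=
  Sfd_line2 hU hF hp v

include hU hF hol in
lemma Sfd_line3' (hp : ((ρ, z, l) : ℝ × ℝ × ℂ) ∈ U) (v : ℝ × ℝ × ℂ) :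
    HasDerivAt (fun w : ℂ => Gfd F (ρ, z, w) v) (Sfd F (ρ, z, l) (0, 0, 1) v) l :=
  Sfd_line3 hU hF hol hp v

end Wrappers

section JWrappers

variable {n : ℕ} {Ω : Set (ℝ × ℝ)} {J : ℝ → ℝ → Matrix (Fin n) (Fin n) ℂ}
variable (hΩ : IsOpen Ω) (hJ : ContDiffOn ℝ 2 (fun p : ℝ × ℝ => J p.1 p.2) Ω)
  (hinv : ∀ p ∈ Ω, IsUnit (J p.1 p.2))
variable {ρ z : ℝ}

include hΩ hJ in
lemma J_line1' (hq : ((ρ, z) : ℝ × ℝ) ∈ Ω) :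
    HasDerivAt (fun t : ℝ => J t z) (Jfd J (ρ, z) (1, 0)) ρ := J_line1 hΩ hJ hq

include hΩ hJ in
lemma J_line2' (hq : ((ρ, z) : ℝ × ℝ) ∈ Ω) :
    HasDerivAt (fun t : ℝ => J ρ t) (Jfd J (ρ, z) (0, 1)) z := J_line2 hΩ hJ hq

include hΩ hJ in
lemma Jfd_line1' (hq : ((ρ, z) : ℝ × ℝ) ∈ Ω) (v : ℝ × ℝ) :
    HasDerivAt (fun t : ℝ => Jfd J (t, z) v) (SJfd J (ρ, z) (1, 0) v) ρ := Jfd_line1 hΩ hJ hq v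

include hΩ hJ in
lemma Jfd_line2' (hq : ((ρ, z) : ℝ × ℝ) ∈ Ω) (v : ℝ × ℝ) :
    HasDerivAt (fun t : ℝ => Jfd J (ρ, t) v) (SJfd J (ρ, z) (0, 1) v) z := Jfd_line2 hΩ hJ hq v

include hΩ hJ hinv in
lemma K_line1' (hq : ((ρ, z) : ℝ × ℝ) ∈ Ω) :
    HasDerivAt (fun t : ℝ => (J t z)⁻¹)
      (-((J ρ z)⁻¹ * Jfd J (ρ, z) (1, 0) * (J ρ z)⁻¹)) ρ := by
  have := K_line1 hΩ hJ hinv (q := (ρ, z)) hq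
  simpa using this

include hΩ hJ hinv in
lemma K_line2' (hq : ((ρ, z) : ℝ × ℝ) ∈ Ω) :
    HasDerivAt (fun t : ℝ => (J ρ t)⁻¹)
      (-((J ρ z)⁻¹ * Jfd J (ρ, z) (0, 1) * (J ρ z)⁻¹)) z := by
  have := K_line2 hΩ hJ hinv (q := (ρ, z)) hq
  simpa using this

end JWrappers

-- master
set_option maxHeartbeats 1600000 in
lemma master {n : ℕ} {Ω : Set (ℝ × ℝ)} (hΩ : IsOpen Ω)
    (hΩpos : ∀ p ∈ Ω, 0 < p.1)
    {J : ℝ → ℝ → Matrix (Fin n) (Fin n) ℂ}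
    (hJ : ContDiffOn ℝ 2 (fun p : ℝ × ℝ => J p.1 p.2) Ω)
    (hinv : ∀ p ∈ Ω, IsUnit (J p.1 p.2))
    (F : ℝ → ℝ → ℂ → (Fin n → ℂ)) (hFt : LaxTest n Ω F)
    (ρ z : ℝ) (hq : ((ρ, z) : ℝ × ℝ) ∈ Ω) (l : ℂ) (hl : l ≠ 0) :
    LaxL1 n J (LaxL2 n J F) ρ z l - LaxL2 n J (LaxL1 n J F) ρ z l
      = (l / (ρ : ℂ)) • LaxL1 n J F ρ z l
        + (l / (ρ : ℂ)) •
          ((deriv (fun r : ℝ => (r : ℂ) • ((J r z)⁻¹ * deriv (fun t : ℝ => J t z) r)) ρ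
            + deriv (fun z' : ℝ => (ρ : ℂ) • ((J ρ z')⁻¹ * deriv (fun t : ℝ => J ρ t) z')) z)
            *ᵥ F ρ z l) := by
  obtain ⟨hF, hol'⟩ := hFt
  set U : Set (ℝ × ℝ × ℂ) := {p : ℝ × ℝ × ℂ | (p.1, p.2.1) ∈ Ω ∧ p.2.2 ≠ 0} with hUdef
  have hU : IsOpen U := by
    have hset : U = ((fun p : ℝ × ℝ × ℂ => (p.1, p.2.1)) ⁻¹' Ω)
        ∩ ((fun p : ℝ × ℝ × ℂ => p.2.2) ⁻¹' {0}ᶜ) := by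
      ext p; simp [hUdef, Set.mem_preimage]
    rw [hset]
    exact (hΩ.preimage (by fun_prop)).inter (isOpen_compl_singleton.preimage (by fun_prop))
  have hol : ∀ p ∈ U, DifferentiableAt ℂ (fun w : ℂ => F p.1 p.2.1 w) p.2.2 :=
    fun p hp => hol' p.1 p.2.1 hp.1 p.2.2 hp.2
  have hp0 : ((ρ, z, l) : ℝ × ℝ × ℂ) ∈ U := ⟨hq, hl⟩
  have hρR : ρ ≠ 0 := (hΩpos _ hq).ne'
  have hρ0 : (ρ : ℂ) ≠ 0 := by exact_mod_cast hρR
  -- eventual memberships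
  have hevΩ1 : ∀ᶠ r in nhds ρ, ((r, z) : ℝ × ℝ) ∈ Ω := by
    have hcont : Continuous (fun t : ℝ => ((t, z) : ℝ × ℝ)) := by fun_prop
    have := hcont.continuousAt (x := ρ) (hΩ.mem_nhds hq)
    exact this
  have hevΩ2 : ∀ᶠ t in nhds z, ((ρ, t) : ℝ × ℝ) ∈ Ω := by
    have hcont : Continuous (fun t : ℝ => ((ρ, t) : ℝ × ℝ)) := by fun_prop
    have := hcont.continuousAt (x := z) (hΩ.mem_nhds hq)
    exact this
  have hevU1 : ∀ᶠ r in nhds ρ, ((r, z, l) : ℝ × ℝ × ℂ) ∈ U := by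
    filter_upwards [hevΩ1] with r hr; exact ⟨hr, hl⟩
  have hevU2 : ∀ᶠ t in nhds z, ((ρ, t, l) : ℝ × ℝ × ℂ) ∈ U := by
    filter_upwards [hevΩ2] with t ht; exact ⟨ht, hl⟩
  have hevU3 : ∀ᶠ w in nhds l, ((ρ, z, w) : ℝ × ℝ × ℂ) ∈ U := by
    filter_upwards [eventually_ne_nhds hl] with w hw; exact ⟨hq, hw⟩
  -- value identities
  have hV2 : ∀ (r z' : ℝ) (w : ℂ), ((r, z', w) : ℝ × ℝ × ℂ) ∈ U →
      LaxL2 n J F r z' w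
        = Complex.I • Gfd F (r, z', w) (0, 1, 0) + w • Gfd F (r, z', w) (1, 0, 0)
          - (w ^ 2 / (r : ℂ)) • Gfd F (r, z', w) (0, 0, 1)
          + w • (((J r z')⁻¹ * Jfd J (r, z') (1, 0)) *ᵥ F r z' w) := by
    intro r z' w hp
    unfold LaxL2
    rw [(line2' hU hF hp).deriv, (line1' hU hF hp).deriv, (line3' hU hF hol hp).deriv,
      ]
    erw [(J_line1' hΩ hJ hp.1).deriv]
  have hV1 : ∀ (r z' : ℝ) (w : ℂ), ((r, z', w) : ℝ × ℝ × ℂ) ∈ U →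
      LaxL1 n J F r z' w
        = Gfd F (r, z', w) (1, 0, 0) + (Complex.I * w) • Gfd F (r, z', w) (0, 1, 0)
          + (w / (r : ℂ)) • Gfd F (r, z', w) (0, 0, 1)
          + (Complex.I * w) • (((J r z')⁻¹ * Jfd J (r, z') (0, 1)) *ᵥ F r z' w) := by
    intro r z' w hp
    unfold LaxL1
    rw [(line1' hU hF hp).deriv, (line2' hU hF hp).deriv, (line3' hU hF hol hp).deriv,
      ]
    erw [(J_line2' hΩ hJ hp.1).deriv]
  -- basic scalar derivatives
  have hofR : HasDerivAt (fun r : ℝ => (r : ℂ)) 1 ρ := by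
    exact Complex.ofRealCLM.hasDerivAt (x := ρ)
  -- matrix line derivatives
  have hQr := (K_line1' hΩ hJ hinv hq).matmul (Jfd_line1' hΩ hJ hq (1, 0))
  have hQz := (K_line2' hΩ hJ hinv hq).matmul (Jfd_line2' hΩ hJ hq (1, 0))
  have hPr := (K_line1' hΩ hJ hinv hq).matmul (Jfd_line1' hΩ hJ hq (0, 1))
  have hPz := (K_line2' hΩ hJ hinv hq).matmul (Jfd_line2' hΩ hJ hq (0, 1))
  -- derivative of LaxL2 F slices
  have hev2ρ : (fun r : ℝ => LaxL2 n J F r z l) =ᶠ[nhds ρ] fun r : ℝ =>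
      Complex.I • Gfd F (r, z, l) (0, 1, 0) + l • Gfd F (r, z, l) (1, 0, 0)
        - (l ^ 2 / (r : ℂ)) • Gfd F (r, z, l) (0, 0, 1)
        + l • (((J r z)⁻¹ * Jfd J (r, z) (1, 0)) *ᵥ F r z l) := by
    filter_upwards [hevU1] with r hr; exact hV2 r z l hr
  have hinvr2 : HasDerivAt (fun r : ℝ => l ^ 2 / (r : ℂ)) (-(l ^ 2 / (ρ : ℂ) ^ 2)) ρ := by
    have := (hasDerivAt_const ρ (l ^ 2)).div hofR hρ0
    exact this.congr_deriv (by ring)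
  have h2ρ := ((((Sfd_line1' hU hF hp0 (0, 1, 0)).const_smul Complex.I).add
      ((Sfd_line1' hU hF hp0 (1, 0, 0)).const_smul l)).sub
      (hinvr2.smul (Sfd_line1' hU hF hp0 (0, 0, 1)))).add
      ((hQr.mulVecc (line1' hU hF hp0)).const_smul l)
  have hT2ρ := (h2ρ.congr_of_eventuallyEq hev2ρ).deriv
  have hev2z : (fun t : ℝ => LaxL2 n J F ρ t l) =ᶠ[nhds z] fun t : ℝ =>
      Complex.I • Gfd F (ρ, t, l) (0, 1, 0) + l • Gfd F (ρ, t, l) (1, 0, 0)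
        - (l ^ 2 / (ρ : ℂ)) • Gfd F (ρ, t, l) (0, 0, 1)
        + l • (((J ρ t)⁻¹ * Jfd J (ρ, t) (1, 0)) *ᵥ F ρ t l) := by
    filter_upwards [hevU2] with t ht; exact hV2 ρ t l ht
  have h2z := ((((Sfd_line2' hU hF hp0 (0, 1, 0)).const_smul Complex.I).add
      ((Sfd_line2' hU hF hp0 (1, 0, 0)).const_smul l)).sub
      ((Sfd_line2' hU hF hp0 (0, 0, 1)).const_smul (l ^ 2 / (ρ : ℂ)))).add
      ((hQz.mulVecc (line2' hU hF hp0)).const_smul l)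
  have hT2z := (h2z.congr_of_eventuallyEq hev2z).deriv
  have hev2w : (fun w : ℂ => LaxL2 n J F ρ z w) =ᶠ[nhds l] fun w : ℂ =>
      Complex.I • Gfd F (ρ, z, w) (0, 1, 0) + w • Gfd F (ρ, z, w) (1, 0, 0)
        - (w ^ 2 / (ρ : ℂ)) • Gfd F (ρ, z, w) (0, 0, 1)
        + w • (((J ρ z)⁻¹ * Jfd J (ρ, z) (1, 0)) *ᵥ F ρ z w) := by
    filter_upwards [hevU3] with w hw; exact hV2 ρ z w hw
  have hw2 : HasDerivAt (fun w : ℂ => w ^ 2 / (ρ : ℂ)) (2 * l / (ρ : ℂ)) l := by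
    have := (hasDerivAt_pow 2 l).div_const (ρ : ℂ)
    exact this.congr_deriv (by norm_num)
  have h2w := ((((Sfd_line3' hU hF hol hp0 (0, 1, 0)).const_smul Complex.I).add
      ((hasDerivAt_id l).smul (Sfd_line3' hU hF hol hp0 (1, 0, 0)))).sub
      (hw2.smul (Sfd_line3' hU hF hol hp0 (0, 0, 1)))).add
      ((hasDerivAt_id l).smul
        ((hasDerivAt_const l ((J ρ z)⁻¹ * Jfd J (ρ, z) (1, 0))).mulVecc (line3' hU hF hol hp0)))
  have hT2w := (h2w.congr_of_eventuallyEq hev2w).deriv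
  -- derivative of LaxL1 F slices
  have hev1ρ : (fun r : ℝ => LaxL1 n J F r z l) =ᶠ[nhds ρ] fun r : ℝ =>
      Gfd F (r, z, l) (1, 0, 0) + (Complex.I * l) • Gfd F (r, z, l) (0, 1, 0)
        + (l / (r : ℂ)) • Gfd F (r, z, l) (0, 0, 1)
        + (Complex.I * l) • (((J r z)⁻¹ * Jfd J (r, z) (0, 1)) *ᵥ F r z l) := by
    filter_upwards [hevU1] with r hr; exact hV1 r z l hr
  have hinvr1 : HasDerivAt (fun r : ℝ => l / (r : ℂ)) (-(l / (ρ : ℂ) ^ 2)) ρ := by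
    have := (hasDerivAt_const ρ l).div hofR hρ0
    exact this.congr_deriv (by ring)
  have h1ρ := ((((Sfd_line1' hU hF hp0 (1, 0, 0)).add
      ((Sfd_line1' hU hF hp0 (0, 1, 0)).const_smul (Complex.I * l))).add
      (hinvr1.smul (Sfd_line1' hU hF hp0 (0, 0, 1)))).add
      ((hPr.mulVecc (line1' hU hF hp0)).const_smul (Complex.I * l)))
  have hT1ρ := (h1ρ.congr_of_eventuallyEq hev1ρ).deriv
  have hev1z : (fun t : ℝ => LaxL1 n J F ρ t l) =ᶠ[nhds z] fun t : ℝ =>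
      Gfd F (ρ, t, l) (1, 0, 0) + (Complex.I * l) • Gfd F (ρ, t, l) (0, 1, 0)
        + (l / (ρ : ℂ)) • Gfd F (ρ, t, l) (0, 0, 1)
        + (Complex.I * l) • (((J ρ t)⁻¹ * Jfd J (ρ, t) (0, 1)) *ᵥ F ρ t l) := by
    filter_upwards [hevU2] with t ht; exact hV1 ρ t l ht
  have h1z := ((((Sfd_line2' hU hF hp0 (1, 0, 0)).add
      ((Sfd_line2' hU hF hp0 (0, 1, 0)).const_smul (Complex.I * l))).add
      ((Sfd_line2' hU hF hp0 (0, 0, 1)).const_smul (l / (ρ : ℂ)))).add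
      ((hPz.mulVecc (line2' hU hF hp0)).const_smul (Complex.I * l)))
  have hT1z := (h1z.congr_of_eventuallyEq hev1z).deriv
  have hev1w : (fun w : ℂ => LaxL1 n J F ρ z w) =ᶠ[nhds l] fun w : ℂ =>
      Gfd F (ρ, z, w) (1, 0, 0) + (Complex.I * w) • Gfd F (ρ, z, w) (0, 1, 0)
        + (w / (ρ : ℂ)) • Gfd F (ρ, z, w) (0, 0, 1)
        + (Complex.I * w) • (((J ρ z)⁻¹ * Jfd J (ρ, z) (0, 1)) *ᵥ F ρ z w) := by
    filter_upwards [hevU3] with w hw; exact hV1 ρ z w hw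
  have hIw : HasDerivAt (fun w : ℂ => Complex.I * w) Complex.I l := by
    simpa using (hasDerivAt_id l).const_mul Complex.I
  have hwρ : HasDerivAt (fun w : ℂ => w / (ρ : ℂ)) (1 / (ρ : ℂ)) l := by
    simpa using (hasDerivAt_id l).div_const (ρ : ℂ)
  have h1w := ((((Sfd_line3' hU hF hol hp0 (1, 0, 0)).add
      (hIw.smul (Sfd_line3' hU hF hol hp0 (0, 1, 0)))).add
      (hwρ.smul (Sfd_line3' hU hF hol hp0 (0, 0, 1)))).add
      (hIw.smul
        ((hasDerivAt_const l ((J ρ z)⁻¹ * Jfd J (ρ, z) (0, 1))).mulVecc (line3' hU hF hol hp0))))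
  have hT1w := (h1w.congr_of_eventuallyEq hev1w).deriv
  -- Yang expression values
  have hYρ : deriv (fun r : ℝ => (r : ℂ) • ((J r z)⁻¹ * deriv (fun t : ℝ => J t z) r)) ρ
      = (ρ : ℂ) • (-((J ρ z)⁻¹ * Jfd J (ρ, z) (1, 0) * (J ρ z)⁻¹) * Jfd J (ρ, z) (1, 0)
          + (J ρ z)⁻¹ * SJfd J (ρ, z) (1, 0) (1, 0))
        + (1 : ℂ) • ((J ρ z)⁻¹ * Jfd J (ρ, z) (1, 0)) := by
    have hmain := hofR.smul hQr
    have hev : (fun r : ℝ => (r : ℂ) • ((J r z)⁻¹ * deriv (fun t : ℝ => J t z) r))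
        =ᶠ[nhds ρ] fun r : ℝ => (r : ℂ) • ((J r z)⁻¹ * Jfd J (r, z) (1, 0)) := by
      filter_upwards [hevΩ1] with r hr
      erw [(J_line1' hΩ hJ hr).deriv]
    exact (hmain.congr_of_eventuallyEq hev).deriv
  have hYz : deriv (fun z' : ℝ => (ρ : ℂ) • ((J ρ z')⁻¹ * deriv (fun t : ℝ => J ρ t) z')) z
      = (ρ : ℂ) • (-((J ρ z)⁻¹ * Jfd J (ρ, z) (0, 1) * (J ρ z)⁻¹) * Jfd J (ρ, z) (0, 1)
          + (J ρ z)⁻¹ * SJfd J (ρ, z) (0, 1) (0, 1)) := by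
    have hmain := hPz.const_smul ((ρ : ℝ) : ℂ)
    have hev : (fun z' : ℝ => (ρ : ℂ) • ((J ρ z')⁻¹ * deriv (fun t : ℝ => J ρ t) z'))
        =ᶠ[nhds z] fun z' : ℝ => (ρ : ℂ) • ((J ρ z')⁻¹ * Jfd J (ρ, z') (0, 1)) := by
      filter_upwards [hevΩ2] with t ht
      erw [(J_line2' hΩ hJ ht).deriv]
    exact (hmain.congr_of_eventuallyEq hev).deriv
  -- symmetry facts
  have hs21 : Sfd F (ρ, z, l) (0, 1, 0) (1, 0, 0) = Sfd F (ρ, z, l) (1, 0, 0) (0, 1, 0) :=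
    Sfd_symm hU hF hp0 _ _
  have hs31 : Sfd F (ρ, z, l) (0, 0, 1) (1, 0, 0) = Sfd F (ρ, z, l) (1, 0, 0) (0, 0, 1) :=
    Sfd_symm hU hF hp0 _ _
  have hs32 : Sfd F (ρ, z, l) (0, 0, 1) (0, 1, 0) = Sfd F (ρ, z, l) (0, 1, 0) (0, 0, 1) :=
    Sfd_symm hU hF hp0 _ _
  have hsJ : SJfd J (ρ, z) (0, 1) (1, 0) = SJfd J (ρ, z) (1, 0) (0, 1) :=
    SJfd_symm hΩ hJ hq _ _
  -- curvature identity
  have hQ2eq : -((J ρ z)⁻¹ * Jfd J (ρ, z) (0, 1) * (J ρ z)⁻¹) * Jfd J (ρ, z) (1, 0)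
        + (J ρ z)⁻¹ * SJfd J (ρ, z) (1, 0) (0, 1)
      = (-((J ρ z)⁻¹ * Jfd J (ρ, z) (1, 0) * (J ρ z)⁻¹) * Jfd J (ρ, z) (0, 1)
          + (J ρ z)⁻¹ * SJfd J (ρ, z) (1, 0) (0, 1))
        + ((J ρ z)⁻¹ * Jfd J (ρ, z) (1, 0)) * ((J ρ z)⁻¹ * Jfd J (ρ, z) (0, 1))
        - ((J ρ z)⁻¹ * Jfd J (ρ, z) (0, 1)) * ((J ρ z)⁻¹ * Jfd J (ρ, z) (1, 0)) := by
    noncomm_ring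
  -- unfold the outer Lax operators
  show (deriv (fun r : ℝ => LaxL2 n J F r z l) ρ
      + (Complex.I * l) • deriv (fun z' : ℝ => LaxL2 n J F ρ z' l) z
      + (l / (ρ : ℂ)) • deriv (fun w : ℂ => LaxL2 n J F ρ z w) l
      + (Complex.I * l) •
          (((J ρ z)⁻¹ * deriv (fun z' : ℝ => J ρ z') z) *ᵥ (LaxL2 n J F ρ z l)))
    - (Complex.I • deriv (fun z' : ℝ => LaxL1 n J F ρ z' l) z
      + l • deriv (fun r : ℝ => LaxL1 n J F r z l) ρ
      - (l ^ 2 / (ρ : ℂ)) • deriv (fun w : ℂ => LaxL1 n J F ρ z w) l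
      + l • (((J ρ z)⁻¹ * deriv (fun r : ℝ => J r z) ρ) *ᵥ (LaxL1 n J F ρ z l)))
    = (l / (ρ : ℂ)) • LaxL1 n J F ρ z l
        + (l / (ρ : ℂ)) •
          ((deriv (fun r : ℝ => (r : ℂ) • ((J r z)⁻¹ * deriv (fun t : ℝ => J t z) r)) ρ
            + deriv (fun z' : ℝ => (ρ : ℂ) • ((J ρ z')⁻¹ * deriv (fun t : ℝ => J ρ t) z')) z)
            *ᵥ F ρ z l)
  rw [hT2ρ, hT2z, hT2w, hT1ρ, hT1z, hT1w, hYρ, hYz]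
  erw [(J_line1' hΩ hJ hq).deriv, (J_line2' hΩ hJ hq).deriv]
  rw [hV2 ρ z l hp0, hV1 ρ z l hp0, hs21, hs31, hs32, hsJ, hQ2eq]
  simp only [Matrix.add_mulVec, Matrix.sub_mulVec, Matrix.neg_mulVec, Matrix.mulVec_add, Matrix.mulVec_sub, Matrix.mulVec_neg,
    Matrix.mulVec_smul, Matrix.mulVec_mulVec, Matrix.smul_mulVec, smul_add, smul_sub,
    smul_smul, one_smul, Matrix.zero_mulVec, zero_add, add_zero, smul_neg, smul_zero, id_eq]
  match_scalars
  all_goals (try field_simp)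
  all_goals (try ring_nf)
  all_goals (try simp only [Complex.I_sq])
  all_goals (try ring)

/-- Lax pair compatibility `L₁L₂ − L₂L₁ = (λ/ρ)L₁` on all test functions is
equivalent to Yang's equation `∂_ρ(ρ J⁻¹∂_ρJ) + ∂_z(ρ J⁻¹∂_zJ) = 0`. -/
theorem lax_compatibility_iff_yang (n : ℕ) (Ω : Set (ℝ × ℝ)) (hΩ : IsOpen Ω)
    (hΩpos : ∀ p ∈ Ω, 0 < p.1)
    (J : ℝ → ℝ → Matrix (Fin n) (Fin n) ℂ)
    (hJ : ContDiffOn ℝ 2 (fun p : ℝ × ℝ => J p.1 p.2) Ω)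
    (hinv : ∀ p ∈ Ω, IsUnit (J p.1 p.2)) :
    (∀ F : ℝ → ℝ → ℂ → (Fin n → ℂ), LaxTest n Ω F →
      ∀ ρ z : ℝ, (ρ, z) ∈ Ω → ∀ l : ℂ, l ≠ 0 →
        LaxL1 n J (LaxL2 n J F) ρ z l - LaxL2 n J (LaxL1 n J F) ρ z l
          = (l / (ρ : ℂ)) • LaxL1 n J F ρ z l) ↔
    (∀ p ∈ Ω,
      deriv (fun r : ℝ => (r : ℂ) • ((J r p.2)⁻¹ * deriv (fun t : ℝ => J t p.2) r)) p.1
        + deriv (fun z' : ℝ => (p.1 : ℂ) • ((J p.1 z')⁻¹ * deriv (fun t : ℝ => J p.1 t) z')) p.2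
        = 0) := by
  constructor
  · intro hcomp p hp
    obtain ⟨ρ, z⟩ := p
    have hρ0 : ((ρ : ℝ) : ℂ) ≠ 0 := by
      exact_mod_cast (hΩpos _ hp).ne'
    have hkey : ∀ c : Fin n → ℂ,
        (deriv (fun r : ℝ => (r : ℂ) • ((J r z)⁻¹ * deriv (fun t : ℝ => J t z) r)) ρ
          + deriv (fun z' : ℝ => (ρ : ℂ) • ((J ρ z')⁻¹ * deriv (fun t : ℝ => J ρ t) z')) z)
          *ᵥ c = 0 := by
      intro c
      have hFt : LaxTest n Ω (fun _ _ _ => c) := by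
        constructor
        · exact contDiffOn_const
        · intro _ _ _ _ _; exact differentiableAt_const c
      have hm := master hΩ hΩpos hJ hinv (fun _ _ _ => c) hFt ρ z hp 1 one_ne_zero
      have hc := hcomp (fun _ _ _ => c) hFt ρ z hp 1 one_ne_zero
      rw [hc] at hm
      have h0 := (add_eq_left.mp hm.symm)
      have h1 : ((1 : ℂ) / (ρ : ℂ)) ≠ 0 := by
        simp [hρ0]
      exact (smul_eq_zero.mp h0).resolve_left h1
    ext i j
    have := congrFun (hkey (Pi.single j 1)) i
    simpa using this
  · intro hyang F hFt ρ z hq l hl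
    have hY := hyang (ρ, z) hq
    rw [master hΩ hΩpos hJ hinv F hFt ρ z hq l hl, hY, Matrix.zero_mulVec, smul_zero, add_zero]
end

section
/- Conservation of the Painlevé III invariants: let I ⊆ (0,∞) be an open interval, let C be a constant 2×2 complex matrix, and let B, D : I → Mat₂(ℂ) be differentiable maps satisfying ∂_ρ B = D B − B D and ∂_ρ(ρ D) = ρ (B C − C B) on I. Then the three functions ρ ↦ tr(B(ρ)²), ρ ↦ ρ·tr(C D(ρ)), and ρ ↦ ρ·tr(B(ρ) D(ρ)) are constant on I. -/
attribute [local instance] Matrix.normedAddCommGroup Matrix.normedSpace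

open Matrix

/-- Conservation of the Painlevé III invariants: if `B, D : I → Mat₂(ℂ)` are
differentiable on an open interval `I ⊆ (0,∞)` and satisfy
`∂_ρ B = DB − BD` and `∂_ρ(ρD) = ρ(BC − CB)` for a constant matrix `C`, then
`tr(B²)`, `ρ·tr(CD)` and `ρ·tr(BD)` are constant on `I`. -/
theorem painleveIII_invariants_constant (a b : ℝ) (ha : 0 ≤ a)
    (C : Matrix (Fin 2) (Fin 2) ℂ) (B D : ℝ → Matrix (Fin 2) (Fin 2) ℂ)
    (hB : ∀ ρ ∈ Set.Ioo a b, HasDerivAt B (D ρ * B ρ - B ρ * D ρ) ρ)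
    (hD : ∀ ρ ∈ Set.Ioo a b,
      HasDerivAt (fun r : ℝ => (r : ℂ) • D r) ((ρ : ℂ) • (B ρ * C - C * B ρ)) ρ) :
    ∀ ρ₁ ∈ Set.Ioo a b, ∀ ρ₂ ∈ Set.Ioo a b,
      Matrix.trace (B ρ₁ * B ρ₁) = Matrix.trace (B ρ₂ * B ρ₂) ∧
      (ρ₁ : ℂ) * Matrix.trace (C * D ρ₁) = (ρ₂ : ℂ) * Matrix.trace (C * D ρ₂) ∧
      (ρ₁ : ℂ) * Matrix.trace (B ρ₁ * D ρ₁) = (ρ₂ : ℂ) * Matrix.trace (B ρ₂ * D ρ₂) := by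
  -- functions with zero derivative on the open interval are constant there
  have key : ∀ f : ℝ → ℂ, (∀ ρ ∈ Set.Ioo a b, HasDerivAt f 0 ρ) →
      ∀ ρ₁ ∈ Set.Ioo a b, ∀ ρ₂ ∈ Set.Ioo a b, f ρ₁ = f ρ₂ := by
    intro f hf ρ₁ h1 ρ₂ h2
    refine (convex_Ioo a b).is_const_of_fderivWithin_eq_zero (𝕜 := ℝ)
      (fun x hx => (hf x hx).differentiableAt.differentiableWithinAt)
      (fun x hx => ?_) h1 h2
    rw [fderivWithin_of_isOpen isOpen_Ioo hx, (hf x hx).hasFDerivAt.fderiv]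
    ext y
    simp
  -- entrywise derivatives
  have hBe : ∀ ρ ∈ Set.Ioo a b, ∀ i j,
      HasDerivAt (fun r => B r i j) ((D ρ * B ρ - B ρ * D ρ) i j) ρ :=
    fun ρ hρ i j => hasDerivAt_pi.mp (hasDerivAt_pi.mp (hB ρ hρ) i) j
  have hDe : ∀ ρ ∈ Set.Ioo a b, ∀ i j,
      HasDerivAt (fun r : ℝ => (r : ℂ) * D r i j)
        (((ρ : ℂ) • (B ρ * C - C * B ρ)) i j) ρ := by
    intro ρ hρ i j
    have h := hasDerivAt_pi.mp (hasDerivAt_pi.mp (hD ρ hρ) i) j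
    simpa [Matrix.smul_apply, smul_eq_mul] using h
  intro ρ₁ h1 ρ₂ h2
  refine ⟨?_, ?_, ?_⟩
  · -- tr(B²)
    refine key (fun r => Matrix.trace (B r * B r)) ?_ ρ₁ h1 ρ₂ h2
    intro ρ hρ
    have h := hBe ρ hρ
    have hd := (((h 0 0).mul (h 0 0)).add ((h 0 1).mul (h 1 0))).add
      (((h 1 0).mul (h 0 1)).add ((h 1 1).mul (h 1 1)))
    have hfun : (fun r => Matrix.trace (B r * B r)) =
        (fun r => (B r 0 0 * B r 0 0 + B r 0 1 * B r 1 0) +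
          (B r 1 0 * B r 0 1 + B r 1 1 * B r 1 1)) := by
      funext r
      simp [Matrix.trace, Matrix.mul_apply, Fin.sum_univ_two, Matrix.diag]
    rw [hfun]
    refine hd.congr_deriv ?_
    simp only [Matrix.sub_apply, Matrix.mul_apply, Fin.sum_univ_two]
    ring
  · -- ρ·tr(CD)
    refine key (fun r : ℝ => (r : ℂ) * Matrix.trace (C * D r)) ?_ ρ₁ h1 ρ₂ h2
    intro ρ hρ
    have h := hDe ρ hρ
    have hd := (((h 0 0).const_mul (C 0 0)).add ((h 1 0).const_mul (C 0 1))).add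
      (((h 0 1).const_mul (C 1 0)).add ((h 1 1).const_mul (C 1 1)))
    have hfun : (fun r : ℝ => (r : ℂ) * Matrix.trace (C * D r)) =
        (fun r : ℝ => (C 0 0 * ((r : ℂ) * D r 0 0) + C 0 1 * ((r : ℂ) * D r 1 0)) +
          (C 1 0 * ((r : ℂ) * D r 0 1) + C 1 1 * ((r : ℂ) * D r 1 1))) := by
      funext r
      simp [Matrix.trace, Matrix.mul_apply, Fin.sum_univ_two, Matrix.diag]
      ring
    rw [hfun]
    refine hd.congr_deriv ?_
    simp only [Matrix.smul_apply, Matrix.sub_apply, Matrix.mul_apply, Fin.sum_univ_two,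
      smul_eq_mul]
    ring
  · -- ρ·tr(BD)
    refine key (fun r : ℝ => (r : ℂ) * Matrix.trace (B r * D r)) ?_ ρ₁ h1 ρ₂ h2
    intro ρ hρ
    have hb := hBe ρ hρ
    have hdd := hDe ρ hρ
    have hd := (((hb 0 0).mul (hdd 0 0)).add ((hb 0 1).mul (hdd 1 0))).add
      (((hb 1 0).mul (hdd 0 1)).add ((hb 1 1).mul (hdd 1 1)))
    have hfun : (fun r : ℝ => (r : ℂ) * Matrix.trace (B r * D r)) =
        (fun r : ℝ => (B r 0 0 * ((r : ℂ) * D r 0 0) + B r 0 1 * ((r : ℂ) * D r 1 0)) +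
          (B r 1 0 * ((r : ℂ) * D r 0 1) + B r 1 1 * ((r : ℂ) * D r 1 1))) := by
      funext r
      simp [Matrix.trace, Matrix.mul_apply, Fin.sum_univ_two, Matrix.diag]
      ring
    rw [hfun]
    refine hd.congr_deriv ?_
    simp only [Matrix.smul_apply, Matrix.sub_apply, Matrix.mul_apply, Fin.sum_univ_two,
      smul_eq_mul]
    ring
end

section
/- Laurent coefficients of solutions of the charged Lax equations satisfy the Ward recursion: let Ω ⊆ {(ρ,z) ∈ ℝ² : ρ > 0} be open, A_ρ, A_z : Ω → ℂ continuously differentiable, and Δ_k : Ω → ℂ (k ∈ ℤ) continuously differentiable. Fix 0 < r₀ < 1 < R₀ and suppose that for each (ρ,z) ∈ Ω the series F(ρ,z,λ) = Σ_{j∈ℤ} Δ_{−j}(ρ,z) λ^{j} converges locally uniformly (together with its term-by-term (ρ,z)-derivatives) on the annulus r₀ < |λ| < R₀, and that F satisfies ∂_ρF + iλ∂_zF + (λ/ρ)∂_λF + iλ A_z F = 0 and i∂_zF + λ∂_ρF − (λ²/ρ)∂_λF − iλ A_ρ F = 0 there. Then for every k ∈ ℤ: ∂_ρ Δ_k − (k/ρ)Δ_k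 = −i(∂_z + A_z)Δ_{k+1} and ∂_ρ Δ_{k+1} − i A_ρ Δ_{k+1} + ((k+1)/ρ)Δ_{k+1} = −i ∂_z Δ_k. -/
open Filter
open Filter Complex intervalIntegral Real

namespace WardAux
noncomputable section

abbrev ann (r₀ R₀ : ℝ) : Set ℂ := {l : ℂ | r₀ < ‖l‖ ∧ ‖l‖ < R₀}

lemma isOpen_ann (r₀ R₀ : ℝ) : IsOpen (ann r₀ R₀) := by
  have : ann r₀ R₀ = (fun l : ℂ => ‖l‖) ⁻¹' (Set.Ioo r₀ R₀) := rfl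
  rw [this]
  exact isOpen_Ioo.preimage continuous_norm

lemma abs_circle (θ : ℝ) : ‖Complex.exp (θ * Complex.I)‖ = 1 := by
  rw [Complex.norm_exp]; simp

lemma circle_mem_ann {r₀ R₀ : ℝ} (hr₁ : r₀ < 1) (hR₀ : 1 < R₀) (θ : ℝ) :
    Complex.exp (θ * Complex.I) ∈ ann r₀ R₀ := by
  constructor <;> rw [abs_circle] <;> assumption

lemma ne_zero_of_mem_ann {r₀ R₀ : ℝ} (hr₀ : 0 < r₀) {l : ℂ} (hl : l ∈ ann r₀ R₀) : l ≠ 0 := by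
  intro h
  rw [h] at hl
  simp at hl
  linarith [hl.1]

lemma ortho (j k : ℤ) :
    (∫ θ in (0:ℝ)..(2*π), Complex.exp (θ * Complex.I) ^ j * Complex.exp (-(k:ℂ) * θ * Complex.I))
      = if j = k then (2*π : ℂ) else 0 := by
  have hcomb : ∀ θ : ℝ, Complex.exp (θ * Complex.I) ^ j * Complex.exp (-(k:ℂ) * θ * Complex.I)
      = Complex.exp ((((j - k : ℤ) : ℂ) * Complex.I) * θ) := by
    intro θ
    rw [← Complex.exp_int_mul, ← Complex.exp_add]
    congr 1
    push_cast
    ring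
  simp_rw [hcomb]
  rcases eq_or_ne j k with rfl | hjk
  · simp
  · have hc : (((j - k : ℤ) : ℂ) * Complex.I) ≠ 0 :=
      mul_ne_zero (Int.cast_ne_zero.2 (sub_ne_zero.2 hjk)) Complex.I_ne_zero
    rw [integral_exp_mul_complex hc]
    have h2 : Complex.exp ((((j - k : ℤ) : ℂ) * Complex.I) * (((2*π : ℝ)) : ℂ)) = 1 := by
      rw [← Complex.exp_int_mul_two_pi_mul_I (j - k)]
      congr 1
      push_cast
      ring
    rw [h2]
    simp [hjk]

lemma continuousOn_psum {r₀ R₀ : ℝ} (hr₀ : 0 < r₀) (c : ℤ → ℂ) (s : Finset ℤ) :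
    ContinuousOn (fun l : ℂ => ∑ j ∈ s, c j * l ^ j) (ann r₀ R₀) := by
  apply continuousOn_finset_sum
  intro j _
  intro l hl
  have hl0 := ne_zero_of_mem_ann hr₀ hl
  exact continuousWithinAt_const.mul ((continuousAt_zpow₀ l j (Or.inl hl0)).continuousWithinAt)

lemma diff_psum {r₀ R₀ : ℝ} (hr₀ : 0 < r₀) (c : ℤ → ℂ) (s : Finset ℤ) :
    DifferentiableOn ℂ (fun l : ℂ => ∑ j ∈ s, c j * l ^ j) (ann r₀ R₀) := by
  intro l hl
  have hl0 := ne_zero_of_mem_ann hr₀ hl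
  exact (HasDerivAt.fun_sum fun j _ =>
    ((hasDerivAt_zpow j l (Or.inl hl0)).const_mul (c j))).differentiableAt.differentiableWithinAt

lemma deriv_psum (c : ℤ → ℂ) (s : Finset ℤ) {l : ℂ} (hl0 : l ≠ 0) :
    deriv (fun l : ℂ => ∑ j ∈ s, c j * l ^ j) l = ∑ j ∈ s, c j * ((j:ℂ) * l ^ (j - 1)) := by
  exact (HasDerivAt.fun_sum fun j _ =>
    ((hasDerivAt_zpow j l (Or.inl hl0)).const_mul (c j))).deriv

lemma cont_integrand {r₀ R₀ : ℝ} (hr₁ : r₀ < 1) (hR₀ : 1 < R₀) {u : ℂ → ℂ}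
    (hu : ContinuousOn u (ann r₀ R₀)) (k : ℤ) :
    Continuous (fun θ : ℝ =>
      u (Complex.exp (θ * Complex.I)) * Complex.exp (-(k:ℂ) * θ * Complex.I)) := by
  apply Continuous.mul
  · exact hu.comp_continuous (by fun_prop) (circle_mem_ann hr₁ hR₀)
  · fun_prop

lemma coeff_extract {r₀ R₀ : ℝ} (hr₀ : 0 < r₀) (hr₁ : r₀ < 1) (hR₀ : 1 < R₀)
    (c : ℤ → ℂ) (g : ℂ → ℂ)
    (h : TendstoLocallyUniformlyOn (fun (s : Finset ℤ) (l : ℂ) => ∑ j ∈ s, c j * l ^ j) g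
      atTop (ann r₀ R₀)) (k : ℤ) :
    (∫ θ in (0:ℝ)..(2*π),
        g (Complex.exp (θ * Complex.I)) * Complex.exp (-(k:ℂ) * θ * Complex.I))
      = (2*π : ℂ) * c k := by
  have hgcont : ContinuousOn g (ann r₀ R₀) :=
    h.continuousOn (Filter.Frequently.of_forall fun s => continuousOn_psum hr₀ c s)
  have hKA : Metric.sphere (0:ℂ) 1 ⊆ ann r₀ R₀ := by
    intro x hx
    rw [mem_sphere_zero_iff_norm] at hx
    constructor <;> rw [hx] <;> assumption
  have hu := (tendstoLocallyUniformlyOn_iff_forall_isCompact (isOpen_ann r₀ R₀)).1 h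
    (Metric.sphere 0 1) hKA (isCompact_sphere 0 1)
  rw [Metric.tendstoUniformlyOn_iff] at hu
  set Φ : Finset ℤ → ℂ := fun s => ∫ θ in (0:ℝ)..(2*π),
    (∑ j ∈ s, c j * Complex.exp (θ * Complex.I) ^ j) * Complex.exp (-(k:ℂ) * θ * Complex.I)
    with hΦ
  have hg_int : IntervalIntegrable (fun θ : ℝ =>
      g (Complex.exp (θ * Complex.I)) * Complex.exp (-(k:ℂ) * θ * Complex.I))
      MeasureTheory.volume 0 (2*π) :=
    (cont_integrand hr₁ hR₀ hgcont k).intervalIntegrable _ _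
  have hs_int : ∀ s : Finset ℤ, IntervalIntegrable (fun θ : ℝ =>
      (∑ j ∈ s, c j * Complex.exp (θ * Complex.I) ^ j) * Complex.exp (-(k:ℂ) * θ * Complex.I))
      MeasureTheory.volume 0 (2*π) := fun s =>
    (cont_integrand hr₁ hR₀ (continuousOn_psum hr₀ c s) k).intervalIntegrable _ _
  have hev : ∀ᶠ s : Finset ℤ in atTop, Φ s = (2*π:ℂ) * c k := by
    filter_upwards [Filter.eventually_ge_atTop ({k} : Finset ℤ)] with s hs
    have hks : k ∈ s := Finset.singleton_subset_iff.1 hs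
    have hterm : ∀ j ∈ s, IntervalIntegrable (fun θ : ℝ =>
        c j * (Complex.exp (θ * Complex.I) ^ j * Complex.exp (-(k:ℂ) * θ * Complex.I)))
        MeasureTheory.volume 0 (2*π) := by
      intro j _
      apply Continuous.intervalIntegrable
      apply continuous_const.mul
      apply Continuous.mul
      · have : ContinuousOn (fun l : ℂ => l ^ j) (ann r₀ R₀) := by
          intro l hl
          exact (continuousAt_zpow₀ l j (Or.inl (ne_zero_of_mem_ann hr₀ hl))).continuousWithinAt
        exact this.comp_continuous (by fun_prop) (circle_mem_ann hr₁ hR₀)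
      · fun_prop
    have : Φ s = ∑ j ∈ s, c j * ∫ θ in (0:ℝ)..(2*π),
        Complex.exp (θ * Complex.I) ^ j * Complex.exp (-(k:ℂ) * θ * Complex.I) := by
      rw [hΦ]
      have hswap : ∀ θ : ℝ, (∑ j ∈ s, c j * Complex.exp (θ * Complex.I) ^ j)
            * Complex.exp (-(k:ℂ) * θ * Complex.I)
          = ∑ j ∈ s, c j * (Complex.exp (θ * Complex.I) ^ j
            * Complex.exp (-(k:ℂ) * θ * Complex.I)) := by
        intro θ
        rw [Finset.sum_mul]
        exact Finset.sum_congr rfl fun j _ => mul_assoc _ _ _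
      simp_rw [hswap]
      rw [intervalIntegral.integral_finset_sum hterm]
      simp_rw [intervalIntegral.integral_const_mul]
    rw [this]
    simp_rw [ortho]
    simp_rw [mul_ite, mul_zero]
    rw [Finset.sum_ite_eq' s k, if_pos hks, mul_comm]
  have hT : Tendsto Φ atTop (nhds (∫ θ in (0:ℝ)..(2*π),
      g (Complex.exp (θ * Complex.I)) * Complex.exp (-(k:ℂ) * θ * Complex.I))) := by
    rw [Metric.tendsto_nhds]
    intro ε hε
    have hπ : (0:ℝ) < 2*π := by positivity
    have hε' : 0 < ε / (2*π+1) := by positivity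
    filter_upwards [hu _ hε'] with s hs
    rw [dist_eq_norm]
    have hsub : Φ s - (∫ θ in (0:ℝ)..(2*π),
        g (Complex.exp (θ * Complex.I)) * Complex.exp (-(k:ℂ) * θ * Complex.I))
        = ∫ θ in (0:ℝ)..(2*π),
          ((∑ j ∈ s, c j * Complex.exp (θ * Complex.I) ^ j) - g (Complex.exp (θ * Complex.I)))
            * Complex.exp (-(k:ℂ) * θ * Complex.I) := by
      rw [hΦ, ← intervalIntegral.integral_sub (hs_int s) hg_int]
      congr 1
      funext θ
      ring
    have hbound : ‖Φ s - (∫ θ in (0:ℝ)..(2*π),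
        g (Complex.exp (θ * Complex.I)) * Complex.exp (-(k:ℂ) * θ * Complex.I))‖
        ≤ (ε / (2*π+1)) * |2*π - 0| := by
      rw [hsub]
      apply intervalIntegral.norm_integral_le_of_norm_le_const
      intro θ _
      rw [norm_mul]
      have h1 : ‖Complex.exp (-(k:ℂ) * θ * Complex.I)‖ = 1 := by
        rw [Complex.norm_exp]
        simp
      rw [h1, mul_one]
      have hmem : Complex.exp (θ * Complex.I) ∈ Metric.sphere (0:ℂ) 1 := by
        rw [mem_sphere_zero_iff_norm]
        exact abs_circle θ
      have := hs _ hmem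
      rw [dist_comm, dist_eq_norm] at this
      exact this.le
    have hlt : (ε / (2*π+1)) * |2*π - 0| < ε := by
      rw [sub_zero, abs_of_pos hπ, div_mul_eq_mul_div, div_lt_iff₀ (by positivity)]
      nlinarith
    exact lt_of_le_of_lt hbound hlt
  exact tendsto_nhds_unique hT (Tendsto.congr' (hev.mono fun s hs => hs.symm) tendsto_const_nhds)

lemma tluo_mul_id {r₀ R₀ : ℝ} (hR : 0 < R₀) {F : Finset ℤ → ℂ → ℂ} {g : ℂ → ℂ}
    (h : TendstoLocallyUniformlyOn F g atTop (ann r₀ R₀)) :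
    TendstoLocallyUniformlyOn (fun s l => l * F s l) (fun l => l * g l) atTop (ann r₀ R₀) := by
  rw [tendstoLocallyUniformlyOn_iff_forall_isCompact (isOpen_ann r₀ R₀)] at h ⊢
  intro K hKA hK
  have hu := h K hKA hK
  rw [Metric.tendstoUniformlyOn_iff] at hu ⊢
  intro ε hε
  filter_upwards [hu (ε / R₀) (by positivity)] with s hs x hx
  have hxR : ‖x‖ < R₀ := (hKA hx).2
  have hd : dist (x * g x) (x * F s x) = ‖x‖ * dist (g x) (F s x) := by
    rw [Complex.dist_eq, Complex.dist_eq, ← mul_sub, norm_mul]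
  rw [hd]
  calc ‖x‖ * dist (g x) (F s x) ≤ R₀ * dist (g x) (F s x) :=
        mul_le_mul_of_nonneg_right hxR.le dist_nonneg
    _ < R₀ * (ε / R₀) := by
        exact mul_lt_mul_of_pos_left (hs x hx) hR
    _ = ε := by field_simp

def circ (θ : ℝ) : ℂ := Complex.exp (θ * Complex.I)

def E (m : ℤ) (θ : ℝ) : ℂ := Complex.exp (-(m:ℂ) * θ * Complex.I)

lemma abs_circ (θ : ℝ) : ‖circ θ‖ = 1 := abs_circle θ

lemma Eshift (m : ℤ) (θ : ℝ) : E (m-1) θ = circ θ * E m θ := by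
  unfold E circ
  rw [← Complex.exp_add]
  congr 1
  push_cast
  ring

lemma coeff_extract' {r₀ R₀ : ℝ} (hr₀ : 0 < r₀) (hr₁ : r₀ < 1) (hR₀ : 1 < R₀)
    (c : ℤ → ℂ) (g : ℂ → ℂ)
    (h : TendstoLocallyUniformlyOn (fun (s : Finset ℤ) (l : ℂ) => ∑ j ∈ s, c j * l ^ j) g
      atTop (ann r₀ R₀)) (m : ℤ) :
    (∫ θ in (0:ℝ)..(2*π), g (circ θ) * E m θ) = (2*π : ℂ) * c m :=
  coeff_extract hr₀ hr₁ hR₀ c g h m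

lemma int_integrand {r₀ R₀ : ℝ} (hr₁ : r₀ < 1) (hR₀ : 1 < R₀) {u : ℂ → ℂ}
    (hu : ContinuousOn u (ann r₀ R₀)) (m : ℤ) :
    IntervalIntegrable (fun θ : ℝ => u (circ θ) * E m θ) MeasureTheory.volume 0 (2*π) :=
  (cont_integrand hr₁ hR₀ hu m).intervalIntegrable _ _

lemma split4 {u1 u2 u3 u4 : ℝ → ℂ} {a b : ℝ} (c₁ c₂ c₃ c₄ : ℂ)
    (h1 : IntervalIntegrable u1 MeasureTheory.volume a b)
    (h2 : IntervalIntegrable u2 MeasureTheory.volume a b)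
    (h3 : IntervalIntegrable u3 MeasureTheory.volume a b)
    (h4 : IntervalIntegrable u4 MeasureTheory.volume a b)
    (h0 : ∀ θ : ℝ, c₁ * u1 θ + c₂ * u2 θ + c₃ * u3 θ + c₄ * u4 θ = 0) :
    c₁ * (∫ θ in a..b, u1 θ) + c₂ * (∫ θ in a..b, u2 θ)
      + c₃ * (∫ θ in a..b, u3 θ) + c₄ * (∫ θ in a..b, u4 θ) = 0 := by
  have hzero : (∫ θ in a..b, (c₁ * u1 θ + c₂ * u2 θ + c₃ * u3 θ + c₄ * u4 θ)) = 0 := by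
    have : (∫ θ in a..b, (c₁ * u1 θ + c₂ * u2 θ + c₃ * u3 θ + c₄ * u4 θ))
        = ∫ _θ in a..b, (0:ℂ) := intervalIntegral.integral_congr fun θ _ => h0 θ
    rw [this]
    simp
  have hsplit : (∫ θ in a..b, (c₁ * u1 θ + c₂ * u2 θ + c₃ * u3 θ + c₄ * u4 θ))
      = c₁ * (∫ θ in a..b, u1 θ) + c₂ * (∫ θ in a..b, u2 θ)
        + c₃ * (∫ θ in a..b, u3 θ) + c₄ * (∫ θ in a..b, u4 θ) := by
    rw [intervalIntegral.integral_add (((h1.const_mul c₁).add (h2.const_mul c₂)).add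
          (h3.const_mul c₃)) (h4.const_mul c₄),
        intervalIntegral.integral_add ((h1.const_mul c₁).add (h2.const_mul c₂)) (h3.const_mul c₃),
        intervalIntegral.integral_add (h1.const_mul c₁) (h2.const_mul c₂),
        intervalIntegral.integral_const_mul, intervalIntegral.integral_const_mul,
        intervalIntegral.integral_const_mul, intervalIntegral.integral_const_mul]
  rw [← hsplit]
  exact hzero

end
end WardAux


/-- Laurent coefficients of solutions of the charged Lax equations satisfy the
Ward recursion. -/
theorem laurent_coefficients_ward_recursion (Ω : Set (ℝ × ℝ)) (hΩ : IsOpen Ω)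
    (hΩpos : ∀ p ∈ Ω, 0 < p.1)
    (Aρ Az : ℝ → ℝ → ℂ)
    (hAρ : ContDiffOn ℝ 1 (fun p : ℝ × ℝ => Aρ p.1 p.2) Ω)
    (hAz : ContDiffOn ℝ 1 (fun p : ℝ × ℝ => Az p.1 p.2) Ω)
    (Δ : ℤ → ℝ → ℝ → ℂ)
    (hΔ : ∀ k : ℤ, ContDiffOn ℝ 1 (fun p : ℝ × ℝ => Δ k p.1 p.2) Ω)
    (r₀ R₀ : ℝ) (hr₀ : 0 < r₀) (hr₁ : r₀ < 1) (hR₀ : 1 < R₀)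
    (F : ℝ → ℝ → ℂ → ℂ)
    (hconv : ∀ p ∈ Ω, TendstoLocallyUniformlyOn
      (fun (s : Finset ℤ) (l : ℂ) => ∑ j ∈ s, Δ (-j) p.1 p.2 * l ^ j)
      (fun l : ℂ => F p.1 p.2 l) atTop
      {l : ℂ | r₀ < ‖l‖ ∧ ‖l‖ < R₀})
    (hconvρ : ∀ p ∈ Ω, TendstoLocallyUniformlyOn
      (fun (s : Finset ℤ) (l : ℂ) => ∑ j ∈ s, deriv (fun r : ℝ => Δ (-j) r p.2) p.1 * l ^ j)
      (fun l : ℂ => deriv (fun r : ℝ => F r p.2 l) p.1) atTop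
      {l : ℂ | r₀ < ‖l‖ ∧ ‖l‖ < R₀})
    (hconvz : ∀ p ∈ Ω, TendstoLocallyUniformlyOn
      (fun (s : Finset ℤ) (l : ℂ) => ∑ j ∈ s, deriv (fun z' : ℝ => Δ (-j) p.1 z') p.2 * l ^ j)
      (fun l : ℂ => deriv (fun z' : ℝ => F p.1 z' l) p.2) atTop
      {l : ℂ | r₀ < ‖l‖ ∧ ‖l‖ < R₀})
    (hPDE1 : ∀ p ∈ Ω, ∀ l : ℂ, r₀ < ‖l‖ → ‖l‖ < R₀ →
      deriv (fun r : ℝ => F r p.2 l) p.1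
        + Complex.I * l * deriv (fun z' : ℝ => F p.1 z' l) p.2
        + (l / (p.1 : ℂ)) * deriv (fun w : ℂ => F p.1 p.2 w) l
        + Complex.I * l * Az p.1 p.2 * F p.1 p.2 l = 0)
    (hPDE2 : ∀ p ∈ Ω, ∀ l : ℂ, r₀ < ‖l‖ → ‖l‖ < R₀ →
      Complex.I * deriv (fun z' : ℝ => F p.1 z' l) p.2
        + l * deriv (fun r : ℝ => F r p.2 l) p.1
        - (l ^ 2 / (p.1 : ℂ)) * deriv (fun w : ℂ => F p.1 p.2 w) l
        - Complex.I * l * Aρ p.1 p.2 * F p.1 p.2 l = 0) :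
    ∀ k : ℤ, ∀ p ∈ Ω,
      (deriv (fun r : ℝ => Δ k r p.2) p.1 - ((k : ℂ) / (p.1 : ℂ)) * Δ k p.1 p.2
        = -Complex.I * (deriv (fun z' : ℝ => Δ (k + 1) p.1 z') p.2
            + Az p.1 p.2 * Δ (k + 1) p.1 p.2)) ∧
      (deriv (fun r : ℝ => Δ (k + 1) r p.2) p.1
          - Complex.I * Aρ p.1 p.2 * Δ (k + 1) p.1 p.2
          + (((k : ℂ) + 1) / (p.1 : ℂ)) * Δ (k + 1) p.1 p.2
        = -Complex.I * deriv (fun z' : ℝ => Δ k p.1 z') p.2) := by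
  intro k p hp
  obtain ⟨ρ, z⟩ := p
  have hρ : 0 < ρ := hΩpos (ρ, z) hp
  have hρC : (ρ : ℂ) ≠ 0 := Complex.ofReal_ne_zero.2 hρ.ne'
  have hR0 : (0:ℝ) < R₀ := lt_trans one_pos hR₀
  have h2π : (2*Real.pi : ℂ) ≠ 0 := by
    simp [Real.pi_ne_zero]
  -- the four locally uniform expansions
  have hG := hconv (ρ, z) hp
  have hGa := hconvρ (ρ, z) hp
  have hGb := hconvz (ρ, z) hp
  have hdiff : ∀ᶠ s : Finset ℤ in Filter.atTop,
      DifferentiableOn ℂ (fun l : ℂ => ∑ j ∈ s, Δ (-j) ρ z * l ^ j) (WardAux.ann r₀ R₀) :=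
    Filter.Eventually.of_forall fun s => WardAux.diff_psum hr₀ _ s
  have hd : TendstoLocallyUniformlyOn
      (deriv ∘ fun (s : Finset ℤ) (l : ℂ) => ∑ j ∈ s, Δ (-j) ρ z * l ^ j)
      (deriv (fun l : ℂ => F ρ z l)) Filter.atTop (WardAux.ann r₀ R₀) :=
    hG.deriv hdiff (WardAux.isOpen_ann r₀ R₀)
  have hd2 := WardAux.tluo_mul_id hR0 hd
  have hH : TendstoLocallyUniformlyOn
      (fun (s : Finset ℤ) (l : ℂ) => ∑ j ∈ s, ((j:ℂ) * Δ (-j) ρ z) * l ^ j)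
      (fun l : ℂ => l * deriv (fun w : ℂ => F ρ z w) l) Filter.atTop (WardAux.ann r₀ R₀) := by
    apply hd2.congr
    intro s l hl
    have hl0 := WardAux.ne_zero_of_mem_ann hr₀ hl
    show l * deriv (fun l' : ℂ => ∑ j ∈ s, Δ (-j) ρ z * l' ^ j) l = _
    rw [WardAux.deriv_psum _ s hl0, Finset.mul_sum]
    apply Finset.sum_congr rfl
    intro j _
    rw [zpow_sub_one₀ hl0]
    field_simp
  -- coefficient identities
  have hIc : ∀ m : ℤ, (∫ θ in (0:ℝ)..(2*Real.pi), F ρ z (WardAux.circ θ) * WardAux.E m θ)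
      = (2*Real.pi : ℂ) * Δ (-m) ρ z := fun m =>
    WardAux.coeff_extract' hr₀ hr₁ hR₀ _ _ hG m
  have hIa : ∀ m : ℤ, (∫ θ in (0:ℝ)..(2*Real.pi),
        deriv (fun r : ℝ => F r z (WardAux.circ θ)) ρ * WardAux.E m θ)
      = (2*Real.pi : ℂ) * deriv (fun r : ℝ => Δ (-m) r z) ρ := fun m =>
    WardAux.coeff_extract' hr₀ hr₁ hR₀ _ _ hGa m
  have hIb : ∀ m : ℤ, (∫ θ in (0:ℝ)..(2*Real.pi),
        deriv (fun z' : ℝ => F ρ z' (WardAux.circ θ)) z * WardAux.E m θ)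
      = (2*Real.pi : ℂ) * deriv (fun z' : ℝ => Δ (-m) ρ z') z := fun m =>
    WardAux.coeff_extract' hr₀ hr₁ hR₀ _ _ hGb m
  have hIH : ∀ m : ℤ, (∫ θ in (0:ℝ)..(2*Real.pi),
        (WardAux.circ θ * deriv (fun w : ℂ => F ρ z w) (WardAux.circ θ)) * WardAux.E m θ)
      = (2*Real.pi : ℂ) * ((m:ℂ) * Δ (-m) ρ z) := fun m =>
    WardAux.coeff_extract' hr₀ hr₁ hR₀ _ _ hH m
  -- integrability
  have hcG : ContinuousOn (fun l : ℂ => F ρ z l) (WardAux.ann r₀ R₀) :=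
    hG.continuousOn (Filter.Frequently.of_forall fun s => WardAux.continuousOn_psum hr₀ _ s)
  have hcGa : ContinuousOn (fun l : ℂ => deriv (fun r : ℝ => F r z l) ρ) (WardAux.ann r₀ R₀) :=
    hGa.continuousOn (Filter.Frequently.of_forall fun s => WardAux.continuousOn_psum hr₀ _ s)
  have hcGb : ContinuousOn (fun l : ℂ => deriv (fun z' : ℝ => F ρ z' l) z) (WardAux.ann r₀ R₀) :=
    hGb.continuousOn (Filter.Frequently.of_forall fun s => WardAux.continuousOn_psum hr₀ _ s)
  have hcH : ContinuousOn (fun l : ℂ => l * deriv (fun w : ℂ => F ρ z w) l) (WardAux.ann r₀ R₀) :=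
    hH.continuousOn (Filter.Frequently.of_forall fun s => WardAux.continuousOn_psum hr₀ _ s)
  have intG : ∀ m : ℤ, IntervalIntegrable (fun θ : ℝ => F ρ z (WardAux.circ θ) * WardAux.E m θ)
      MeasureTheory.volume 0 (2*Real.pi) := fun m => WardAux.int_integrand hr₁ hR₀ hcG m
  have intA : ∀ m : ℤ, IntervalIntegrable
      (fun θ : ℝ => deriv (fun r : ℝ => F r z (WardAux.circ θ)) ρ * WardAux.E m θ)
      MeasureTheory.volume 0 (2*Real.pi) := fun m => WardAux.int_integrand hr₁ hR₀ hcGa m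
  have intB : ∀ m : ℤ, IntervalIntegrable
      (fun θ : ℝ => deriv (fun z' : ℝ => F ρ z' (WardAux.circ θ)) z * WardAux.E m θ)
      MeasureTheory.volume 0 (2*Real.pi) := fun m => WardAux.int_integrand hr₁ hR₀ hcGb m
  have intH : ∀ m : ℤ, IntervalIntegrable
      (fun θ : ℝ => (WardAux.circ θ * deriv (fun w : ℂ => F ρ z w) (WardAux.circ θ)) * WardAux.E m θ)
      MeasureTheory.volume 0 (2*Real.pi) := fun m => WardAux.int_integrand hr₁ hR₀ hcH m
  -- the two recursions, general index m
  have key1 : ∀ m : ℤ,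
      deriv (fun r : ℝ => Δ (-m) r z) ρ
        + Complex.I * deriv (fun z' : ℝ => Δ (-(m-1)) ρ z') z
        + (m:ℂ)/(ρ:ℂ) * Δ (-m) ρ z
        + Complex.I * Az ρ z * Δ (-(m-1)) ρ z = 0 := by
    intro m
    have h0 : ∀ θ : ℝ,
        (1:ℂ) * (deriv (fun r : ℝ => F r z (WardAux.circ θ)) ρ * WardAux.E m θ)
        + Complex.I * (deriv (fun z' : ℝ => F ρ z' (WardAux.circ θ)) z * WardAux.E (m-1) θ)
        + (ρ:ℂ)⁻¹ * ((WardAux.circ θ * deriv (fun w : ℂ => F ρ z w) (WardAux.circ θ)) * WardAux.E m θ)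
        + (Complex.I * Az ρ z) * (F ρ z (WardAux.circ θ) * WardAux.E (m-1) θ) = 0 := by
      intro θ
      have hpde := hPDE1 (ρ, z) hp (WardAux.circ θ)
        (by rw [WardAux.abs_circ]; exact hr₁) (by rw [WardAux.abs_circ]; exact hR₀)
      rw [WardAux.Eshift m θ]
      linear_combination (WardAux.E m θ) * hpde
    have hsum := WardAux.split4 (1:ℂ) Complex.I ((ρ:ℂ)⁻¹) (Complex.I * Az ρ z)
      (intA m) (intB (m-1)) (intH m) (intG (m-1)) h0
    rw [hIa m, hIb (m-1), hIH m, hIc (m-1)] at hsum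
    have h' : (2*Real.pi : ℂ) * (deriv (fun r : ℝ => Δ (-m) r z) ρ
        + Complex.I * deriv (fun z' : ℝ => Δ (-(m-1)) ρ z') z
        + (m:ℂ)/(ρ:ℂ) * Δ (-m) ρ z
        + Complex.I * Az ρ z * Δ (-(m-1)) ρ z) = (2*Real.pi : ℂ) * 0 := by
      rw [mul_zero]
      linear_combination hsum
    exact mul_left_cancel₀ h2π h'
  have key2 : ∀ m : ℤ,
      Complex.I * deriv (fun z' : ℝ => Δ (-m) ρ z') z
        + deriv (fun r : ℝ => Δ (-(m-1)) r z) ρ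
        - ((m:ℂ)-1)/(ρ:ℂ) * Δ (-(m-1)) ρ z
        - Complex.I * Aρ ρ z * Δ (-(m-1)) ρ z = 0 := by
    intro m
    have h0 : ∀ θ : ℝ,
        Complex.I * (deriv (fun z' : ℝ => F ρ z' (WardAux.circ θ)) z * WardAux.E m θ)
        + (1:ℂ) * (deriv (fun r : ℝ => F r z (WardAux.circ θ)) ρ * WardAux.E (m-1) θ)
        + (-(ρ:ℂ)⁻¹) * ((WardAux.circ θ * deriv (fun w : ℂ => F ρ z w) (WardAux.circ θ)) * WardAux.E (m-1) θ)
        + (-(Complex.I * Aρ ρ z)) * (F ρ z (WardAux.circ θ) * WardAux.E (m-1) θ) = 0 := by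
      intro θ
      have hpde := hPDE2 (ρ, z) hp (WardAux.circ θ)
        (by rw [WardAux.abs_circ]; exact hr₁) (by rw [WardAux.abs_circ]; exact hR₀)
      rw [WardAux.Eshift m θ]
      linear_combination (WardAux.E m θ) * hpde
    have hsum := WardAux.split4 Complex.I (1:ℂ) (-(ρ:ℂ)⁻¹) (-(Complex.I * Aρ ρ z))
      (intB m) (intA (m-1)) (intH (m-1)) (intG (m-1)) h0
    rw [hIb m, hIa (m-1), hIH (m-1), hIc (m-1)] at hsum
    push_cast at hsum
    have h' : (2*Real.pi : ℂ) * (Complex.I * deriv (fun z' : ℝ => Δ (-m) ρ z') z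
        + deriv (fun r : ℝ => Δ (-(m-1)) r z) ρ
        - ((m:ℂ)-1)/(ρ:ℂ) * Δ (-(m-1)) ρ z
        - Complex.I * Aρ ρ z * Δ (-(m-1)) ρ z) = (2*Real.pi : ℂ) * 0 := by
      rw [mul_zero]
      linear_combination hsum
    exact mul_left_cancel₀ h2π h'
  have e0 : (-(-k) : ℤ) = k := neg_neg k
  have e1 : (-(-k-1) : ℤ) = k+1 := by ring
  have K1 := key1 (-k)
  have K2 := key2 (-k)
  rw [e0, e1] at K1 K2
  push_cast at K1 K2
  constructor
  · linear_combination K1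
  · linear_combination K2
end

section
/- Frobenius analysis of Painlevé III at the fixed singularity: let α, β, γ, δ ∈ ℂ with α ≠ 0 and γ ≠ 0, let ε > 0, and let f be holomorphic and nowhere zero on the punctured disc D' = {ρ ∈ ℂ : 0 < |ρ| < ε}. Suppose f is meromorphic at 0 (i.e., ρ^N f(ρ) extends holomorphically to 0 for some N ∈ ℕ) and that f satisfies the Painlevé III equation f'' = (f')²/f − f'/ρ + (α f² + β)/ρ + γ f³ + δ/f on D'. Then f has at most a simple pole at ρ = 0, and if f does have a pole at 0 then lim_{ρ→0} ρ f(ρ) = −α/γ. -/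
open Metric Filter Topology Set

private lemma painleve_alg_key (k : ℕ) (ρ F F' F'' u u' u'' α β γ δ : ℂ)
    (hu : u = ρ ^ (k+1) * F)
    (h1 : u' = ((k:ℂ)+1) * (ρ ^ k * F) + ρ ^ (k+1) * F')
    (h2 : u'' * ρ = ((k:ℂ)+1) * (k:ℂ) * ρ ^ k * F + (2*(k:ℂ)+2) * ρ ^ (k+1) * F'
        + ρ ^ (k+2) * F'')
    (hE : F'' * F * ρ = F' ^ 2 * ρ - F' * F + (α * F ^ 2 + β) * F + γ * F ^ 4 * ρ + δ * ρ) :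
    ρ ^ (2*k+2) * (u * u'' - u' ^ 2) + ρ ^ (2*k+1) * u * u'
      = α * ρ ^ k * u ^ 3 + β * ρ ^ (3*k+2) * u + γ * u ^ 4 + δ * ρ ^ (4*k+4) := by
  subst hu h1
  linear_combination (ρ ^ (2*k+1) * (ρ ^ (k+1) * F)) * h2 + ρ ^ (4*k+3) * hE

/-- Frobenius analysis of Painlevé III at the fixed singularity: a nowhere-zero
holomorphic solution on a punctured disc around `0` that is meromorphic at `0`
(with `α ≠ 0`, `γ ≠ 0`) has at most a simple pole at `0`, and if it has a pole
then `ρ f(ρ) → −α/γ` as `ρ → 0`. -/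
theorem painleveIII_frobenius (α β γ δ : ℂ) (hα : α ≠ 0) (hγ : γ ≠ 0)
    (ε : ℝ) (hε : 0 < ε) (f : ℂ → ℂ)
    (hf : DifferentiableOn ℂ f (ball (0 : ℂ) ε \ {0}))
    (hne : ∀ ρ ∈ ball (0 : ℂ) ε \ {0}, f ρ ≠ 0)
    (hmer : ∃ (N : ℕ) (g : ℂ → ℂ), DifferentiableOn ℂ g (ball (0 : ℂ) ε) ∧
      ∀ ρ ∈ ball (0 : ℂ) ε \ {0}, g ρ = ρ ^ N * f ρ)
    (hP3 : ∀ ρ ∈ ball (0 : ℂ) ε \ {0},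
      deriv (deriv f) ρ =
        (deriv f ρ) ^ 2 / f ρ - deriv f ρ / ρ + (α * (f ρ) ^ 2 + β) / ρ
          + γ * (f ρ) ^ 3 + δ / f ρ) :
    (∃ h : ℂ → ℂ, DifferentiableOn ℂ h (ball (0 : ℂ) ε) ∧
      ∀ ρ ∈ ball (0 : ℂ) ε \ {0}, h ρ = ρ * f ρ) ∧
    ((¬ ∃ g : ℂ → ℂ, DifferentiableOn ℂ g (ball (0 : ℂ) ε) ∧
        ∀ ρ ∈ ball (0 : ℂ) ε \ {0}, g ρ = f ρ) →
      Tendsto (fun ρ : ℂ => ρ * f ρ) (nhdsWithin 0 {(0 : ℂ)}ᶜ) (nhds (-α / γ))) := by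
  obtain ⟨N, g₀, hg₀, hg₀f⟩ := hmer
  set T : Set ℂ := ball (0 : ℂ) ε \ {0} with hTdef
  have hT : IsOpen T := isOpen_ball.sdiff isClosed_singleton
  have hball : ball (0 : ℂ) ε ∈ 𝓝 (0 : ℂ) := ball_mem_nhds _ hε
  have hfT : ∀ ρ ∈ T, DifferentiableAt ℂ f ρ := fun ρ hρ => hf.differentiableAt (hT.mem_nhds hρ)
  have hfan : AnalyticOnNhd ℂ f T := hf.analyticOnNhd hT
  have hfan' : AnalyticOnNhd ℂ (deriv f) T := hfan.deriv
  -- f is meromorphic at 0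
  have hmero : MeromorphicAt f 0 := by
    refine ⟨N + 1, ?_⟩
    have hga : AnalyticAt ℂ (fun z => z * g₀ z) 0 :=
      analyticAt_id.mul (hg₀.analyticAt hball)
    apply hga.congr
    filter_upwards [hball] with z hz
    rcases eq_or_ne z 0 with rfl | hz0
    · simp
    · have := hg₀f z ⟨hz, hz0⟩
      simp only [smul_eq_mul, sub_zero, pow_succ]
      rw [this]; ring
  -- its order is a finite integer c
  have horder : meromorphicOrderAt f 0 ≠ ⊤ := by
    intro htop
    have h0 : ∀ᶠ z in 𝓝[≠] (0:ℂ), f z = 0 := meromorphicOrderAt_eq_top_iff.mp htop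
    have h2 : T ∈ 𝓝[≠] (0:ℂ) := diff_mem_nhdsWithin_compl hball {0}
    obtain ⟨z, hz0, hzT⟩ := (h0.and h2).exists
    exact hne z hzT hz0
  obtain ⟨c, hc⟩ := WithTop.ne_top_iff_exists.mp horder
  replace hc := hc.symm
  obtain ⟨u, hu0, hune, hufu⟩ := (meromorphicOrderAt_eq_int_iff hmero).mp hc
  -- choose a small radius with good properties
  have hev : ∀ᶠ z in 𝓝 (0:ℂ), AnalyticAt ℂ u z := hu0.eventually_analyticAt
  have hufu' : ∀ᶠ z in 𝓝 (0:ℂ), z ≠ 0 → f z = z ^ c * u z := by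
    rw [eventually_nhdsWithin_iff] at hufu
    filter_upwards [hufu] with z hz hz0
    simpa [smul_eq_mul] using hz hz0
  have hball' : ∀ᶠ z in 𝓝 (0:ℂ), z ∈ ball (0:ℂ) ε := hball
  obtain ⟨r, hr, hrP⟩ := Metric.eventually_nhds_iff_ball.mp ((hball'.and hev).and hufu')
  set S : Set ℂ := ball (0 : ℂ) r \ {0} with hSdef
  have hS : IsOpen S := isOpen_ball.sdiff isClosed_singleton
  have hST : S ⊆ T := fun z hz => ⟨(hrP z hz.1).1.1, hz.2⟩
  have hSnhds : S ∈ 𝓝[≠] (0:ℂ) := diff_mem_nhdsWithin_compl (ball_mem_nhds _ hr) {0}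
  have huan : AnalyticOnNhd ℂ u (ball (0:ℂ) r) := fun z hz => (hrP z hz).1.2
  have huan' : AnalyticOnNhd ℂ (deriv u) (ball (0:ℂ) r) := huan.deriv
  have huan'' : AnalyticOnNhd ℂ (deriv (deriv u)) (ball (0:ℂ) r) := huan'.deriv
  have hfS : ∀ z ∈ S, f z = z ^ c * u z := fun z hz => (hrP z hz.1).2 hz.2
  -- the key coefficient identity in the pole case
  have key : ∀ k : ℕ, c = -((k : ℤ) + 1) →
      α * 0 ^ k * (u 0) ^ 3 + γ * (u 0) ^ 4 = 0 := by
    intro k hck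
    -- u = z^(k+1) * f on S
    have hUf : ∀ z ∈ S, u z = z ^ (k+1) * f z := by
      intro z hz
      have hz0 : z ≠ 0 := hz.2
      rw [hfS z hz, hck]
      rw [zpow_neg, ← mul_assoc]
      rw [show ((k : ℤ) + 1) = ((k + 1 : ℕ) : ℤ) by push_cast; ring, zpow_natCast]
      field_simp
    -- first derivative of u on S
    have hdu : ∀ z ∈ S, deriv u z = ((k:ℂ)+1) * (z ^ k * f z) + z ^ (k+1) * deriv f z := by
      intro z hz
      have heq : u =ᶠ[𝓝 z] fun w => w ^ (k+1) * f w :=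
        eventually_of_mem (hS.mem_nhds hz) hUf
      rw [heq.deriv_eq, deriv_fun_mul (differentiableAt_pow _) (hfT z (hST hz))]
      simp [deriv_pow]
      ring
    -- the identity on S
    have hid : ∀ ρ ∈ S,
        ρ ^ (2*k+2) * (u ρ * deriv (deriv u) ρ - (deriv u ρ) ^ 2)
          + ρ ^ (2*k+1) * u ρ * deriv u ρ
        = α * ρ ^ k * (u ρ) ^ 3 + β * ρ ^ (3*k+2) * u ρ + γ * (u ρ) ^ 4
          + δ * ρ ^ (4*k+4) := by
      intro ρ hρ
      have hρ0 : (ρ:ℂ) ≠ 0 := hρ.2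
      have hρT : ρ ∈ T := hST hρ
      have hfρ : f ρ ≠ 0 := hne ρ hρT
      -- second derivative relation
      have h2 : deriv (deriv u) ρ * ρ
          = ((k:ℂ)+1) * (k:ℂ) * ρ ^ k * f ρ + (2*(k:ℂ)+2) * ρ ^ (k+1) * deriv f ρ
            + ρ ^ (k+2) * deriv (deriv f) ρ := by
        have heq : deriv u =ᶠ[𝓝 ρ]
            fun w => ((k:ℂ)+1) * (w ^ k * f w) + w ^ (k+1) * deriv f w :=
          eventually_of_mem (hS.mem_nhds hρ) hdu
        rw [heq.deriv_eq]
        have d1 : DifferentiableAt ℂ (fun w : ℂ => w ^ k * f w) ρ :=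
          (differentiableAt_pow _).mul (hfT ρ hρT)
        have d2 : DifferentiableAt ℂ (fun w : ℂ => w ^ (k+1) * deriv f w) ρ :=
          (differentiableAt_pow _).mul (hfan' ρ hρT).differentiableAt
        rw [deriv_fun_add (d1.const_mul _) d2, deriv_const_mul _ d1,
          deriv_fun_mul (differentiableAt_pow _) (hfT ρ hρT),
          deriv_fun_mul (differentiableAt_pow _) (hfan' ρ hρT).differentiableAt]
        simp only [deriv_pow_field]
        have kk : (k:ℂ) * ρ ^ (k-1) * ρ = (k:ℂ) * ρ ^ k := by
          rcases k with _ | k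
          · simp
          · simp [pow_succ]; ring
        push_cast
        linear_combination ((k:ℂ)+1) * f ρ * kk
      have hE : deriv (deriv f) ρ * f ρ * ρ
          = (deriv f ρ) ^ 2 * ρ - deriv f ρ * f ρ + (α * (f ρ) ^ 2 + β) * f ρ
            + γ * (f ρ) ^ 4 * ρ + δ * ρ := by
        rw [hP3 ρ hρT]
        field_simp
      exact painleve_alg_key k ρ (f ρ) (deriv f ρ) (deriv (deriv f) ρ)
        (u ρ) (deriv u ρ) (deriv (deriv u) ρ) α β γ δ
        (hUf ρ hρ) (hdu ρ hρ) h2 hE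
    -- take limits along the punctured neighbourhood
    have h0mem : (0:ℂ) ∈ ball (0:ℂ) r := mem_ball_self hr
    have cu : ContinuousAt u 0 := (huan 0 h0mem).continuousAt
    have cdu : ContinuousAt (deriv u) 0 := (huan' 0 h0mem).continuousAt
    have cddu : ContinuousAt (deriv (deriv u)) 0 := (huan'' 0 h0mem).continuousAt
    have hLc : ContinuousAt (fun ρ : ℂ =>
        ρ ^ (2*k+2) * (u ρ * deriv (deriv u) ρ - (deriv u ρ) ^ 2)
          + ρ ^ (2*k+1) * u ρ * deriv u ρ) 0 := by
      exact (((continuous_pow _).continuousAt.mul ((cu.mul cddu).sub (cdu.pow 2))).add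
        (((continuous_pow _).continuousAt.mul cu).mul cdu))
    have hRc : ContinuousAt (fun ρ : ℂ =>
        α * ρ ^ k * (u ρ) ^ 3 + β * ρ ^ (3*k+2) * u ρ + γ * (u ρ) ^ 4
          + δ * ρ ^ (4*k+4)) 0 := by
      exact ((((continuousAt_const.mul (continuous_pow _).continuousAt).mul (cu.pow 3)).add
        ((continuousAt_const.mul (continuous_pow _).continuousAt).mul cu)).add
        (continuousAt_const.mul (cu.pow 4))).add
        (continuousAt_const.mul (continuous_pow _).continuousAt)
    have hLt : Tendsto (fun ρ : ℂ =>
        ρ ^ (2*k+2) * (u ρ * deriv (deriv u) ρ - (deriv u ρ) ^ 2)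
          + ρ ^ (2*k+1) * u ρ * deriv u ρ) (𝓝[≠] (0:ℂ)) (𝓝 0) := by
      have := hLc.tendsto.mono_left (nhdsWithin_le_nhds (s := {(0:ℂ)}ᶜ))
      simpa using this
    have hRt : Tendsto (fun ρ : ℂ =>
        α * ρ ^ k * (u ρ) ^ 3 + β * ρ ^ (3*k+2) * u ρ + γ * (u ρ) ^ 4
          + δ * ρ ^ (4*k+4)) (𝓝[≠] (0:ℂ))
        (𝓝 (α * 0 ^ k * (u 0) ^ 3 + γ * (u 0) ^ 4)) := by
      have := hRc.tendsto.mono_left (nhdsWithin_le_nhds (s := {(0:ℂ)}ᶜ))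
      simpa using this
    have heq : (fun ρ : ℂ =>
        ρ ^ (2*k+2) * (u ρ * deriv (deriv u) ρ - (deriv u ρ) ^ 2)
          + ρ ^ (2*k+1) * u ρ * deriv u ρ) =ᶠ[𝓝[≠] (0:ℂ)]
        (fun ρ : ℂ => α * ρ ^ k * (u ρ) ^ 3 + β * ρ ^ (3*k+2) * u ρ + γ * (u ρ) ^ 4
          + δ * ρ ^ (4*k+4)) :=
      eventually_of_mem hSnhds hid
    exact (tendsto_nhds_unique (hLt.congr' heq) hRt).symm
  -- Part 1 : no pole of order ≥ 2, i.e. c ≥ -1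
  have hc1 : -1 ≤ c := by
    by_contra hlt
    push_neg at hlt
    set k : ℕ := (-c - 1).toNat with hkdef
    have hkz : (k : ℤ) = -c - 1 := Int.toNat_of_nonneg (by omega)
    have hck : c = -((k:ℤ) + 1) := by omega
    have hk0 : k ≠ 0 := by omega
    have := key k hck
    rw [zero_pow hk0] at this
    simp only [mul_zero, zero_mul, zero_add] at this
    exact (mul_ne_zero hγ (pow_ne_zero 4 hune)) this
  -- Part 2 : construct the analytic extension of ρ * f ρ
  constructor
  · set n : ℕ := (c + 1).toNat with hndef
    have hnz : (n : ℤ) = c + 1 := Int.toNat_of_nonneg (by omega)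
    refine ⟨fun ρ => if ρ = 0 then (0:ℂ) ^ n * u 0 else ρ * f ρ, ?_, ?_⟩
    · intro ρ hρ
      rcases eq_or_ne ρ 0 with rfl | hρ0
      · have heq : (fun z : ℂ => if z = 0 then (0:ℂ) ^ n * u 0 else z * f z)
            =ᶠ[𝓝 (0:ℂ)] fun z => z ^ n * u z := by
          filter_upwards [ball_mem_nhds (0:ℂ) hr] with z hz
          rcases eq_or_ne z 0 with rfl | hz0
          · simp
          · rw [if_neg hz0, hfS z ⟨hz, hz0⟩]
            rw [show z ^ n = z ^ ((n:ℤ)) by rw [zpow_natCast], hnz,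
              zpow_add_one₀ hz0]
            ring
        have hda : DifferentiableAt ℂ (fun z : ℂ => z ^ n * u z) 0 :=
          ((differentiableAt_pow n).mul hu0.differentiableAt)
        exact (heq.differentiableAt_iff.mpr hda).differentiableWithinAt
      · have heq : (fun z : ℂ => if z = 0 then (0:ℂ) ^ n * u 0 else z * f z)
            =ᶠ[𝓝 ρ] fun z => z * f z := by
          filter_upwards [hT.mem_nhds ⟨hρ, hρ0⟩] with z hz
          have hz0 : z ≠ 0 := hz.2
          rw [if_neg hz0]
        have hda : DifferentiableAt ℂ (fun z : ℂ => z * f z) ρ :=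
          differentiableAt_id.mul (hfT ρ ⟨hρ, hρ0⟩)
        exact (heq.differentiableAt_iff.mpr hda).differentiableWithinAt
    · intro ρ hρ
      have hρ0 : ρ ≠ 0 := hρ.2
      exact if_neg hρ0
  -- Part 3 : the limit in the genuine pole case
  · intro hno
    have hcneg : c < 0 := by
      by_contra hge
      push_neg at hge
      apply hno
      set n : ℕ := c.toNat with hndef
      have hnz : (n : ℤ) = c := Int.toNat_of_nonneg hge
      refine ⟨fun ρ => if ρ = 0 then (0:ℂ) ^ n * u 0 else f ρ, ?_, ?_⟩
      · intro ρ hρ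
        rcases eq_or_ne ρ 0 with rfl | hρ0
        · have heq : (fun z : ℂ => if z = 0 then (0:ℂ) ^ n * u 0 else f z)
              =ᶠ[𝓝 (0:ℂ)] fun z => z ^ n * u z := by
            filter_upwards [ball_mem_nhds (0:ℂ) hr] with z hz
            rcases eq_or_ne z 0 with rfl | hz0
            · simp
            · rw [if_neg hz0, hfS z ⟨hz, hz0⟩,
                show z ^ n = z ^ ((n:ℤ)) by rw [zpow_natCast], hnz]
          have hda : DifferentiableAt ℂ (fun z : ℂ => z ^ n * u z) 0 :=
            ((differentiableAt_pow n).mul hu0.differentiableAt)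
          exact (heq.differentiableAt_iff.mpr hda).differentiableWithinAt
        · have heq : (fun z : ℂ => if z = 0 then (0:ℂ) ^ n * u 0 else f z)
              =ᶠ[𝓝 ρ] f := by
            filter_upwards [hT.mem_nhds ⟨hρ, hρ0⟩] with z hz
            have hz0 : z ≠ 0 := hz.2
            rw [if_neg hz0]
          exact (heq.differentiableAt_iff.mpr (hfT ρ ⟨hρ, hρ0⟩)).differentiableWithinAt
      · intro ρ hρ
        have hρ0 : ρ ≠ 0 := hρ.2
        exact if_neg hρ0
    have hcm1 : c = -1 := by omega
    have hk := key 0 (by omega)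
    have hu0val : u 0 = -α / γ := by
      have h3 : (u 0) ^ 3 ≠ 0 := pow_ne_zero 3 hune
      have hfac : (u 0) ^ 3 * (α + γ * u 0) = 0 := by linear_combination hk
      have hlin : α + γ * u 0 = 0 := by
        rcases mul_eq_zero.mp hfac with h | h
        · exact absurd h h3
        · exact h
      rw [eq_div_iff hγ]
      linear_combination hlin
    have heq : (fun ρ : ℂ => ρ * f ρ) =ᶠ[𝓝[≠] (0:ℂ)] u := by
      apply eventually_of_mem hSnhds
      intro z hz
      have hz0 : z ≠ 0 := hz.2
      show z * f z = u z
      rw [hfS z hz, hcm1]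
      field_simp
    have hut : Tendsto u (𝓝[≠] (0:ℂ)) (𝓝 (u 0)) :=
      ((huan 0 (mem_ball_self hr)).continuousAt.tendsto).mono_left nhdsWithin_le_nhds
    rw [← hu0val]
    exact hut.congr' heq.symm
end
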